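/- arXiv:0802.0738 — 5 statements merged into one kernel-verified Lean document; each statement's English description precedes it below -/
import Mathlib

section
/- Let λ_1 > … > λ_m be real numbers and let w be real. Then lim over distinct tuples (w_1,…,w_L) → (w,…,w) of det[e^{λ_i w_j'}]_{i,j=1}^m / (∏_{i<j}(λ_i − λ_j) ∏_{i<j}(w_j' − w_i')) — where (w_1',…,w_m') consists of fixed distinct values outside a group of L arguments tending to w — equals (1/∏_{i=1}^{L−1} i!) times det G / (∏_{i<j}(λ_i − λ_j) ∏_{i<j, w_i ≠ w_j}(w_i − w_j)), where the columns of G corresponding to the L coincident arguments are λ_i^{L−1} e^{λ_i w}, λ_i^{L−2} e^{λ_i w}, …, λ_i e^{λ_i w}, e^{λ_i w}, and the remaining columns are e^{λ_i w_j}. -/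
open Filter Topology Matrix Finset

open Finset

noncomputable section CWaux2

open Finset

noncomputable section CWaux

/-- Complete homogeneous sum of degree `d` in the first `n` values of `u`. -/
def cwH : ℕ → ℕ → (ℕ → ℝ) → ℝ
  | 0, _, _ => 1
  | _+1, 0, _ => 0
  | d+1, n+1, u => u 0 * cwH d (n+1) u + cwH (d+1) n (fun i => u (i+1))

@[simp] lemma cwH_zero (n : ℕ) (u : ℕ → ℝ) : cwH 0 n u = 1 := by cases n <;> rw [cwH]

@[simp] lemma cwH_succ_zero (d : ℕ) (u : ℕ → ℝ) : cwH (d+1) 0 u = 0 := by rw [cwH]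

lemma cwH_succ_succ (d n : ℕ) (u : ℕ → ℝ) :
    cwH (d+1) (n+1) u = u 0 * cwH d (n+1) u + cwH (d+1) n (fun i => u (i+1)) := by rw [cwH]

lemma cwH_congr : ∀ (d n : ℕ) (u v : ℕ → ℝ), (∀ i < n, u i = v i) → cwH d n u = cwH d n v := by
  intro d
  induction d with
  | zero => intro n u v _; simp
  | succ d ih =>
    intro n
    induction n with
    | zero => intro u v _; simp
    | succ n ihn =>
      intro u v h
      rw [cwH_succ_succ, cwH_succ_succ, h 0 (Nat.succ_pos n), ih (n+1) u v h,
        ihn (fun i => u (i+1)) (fun i => v (i+1)) (fun i hi => h (i+1) (by omega))]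

lemma cwH_one (d : ℕ) (u : ℕ → ℝ) : cwH d 1 u = u 0 ^ d := by
  induction d with
  | zero => simp
  | succ d ih => rw [cwH_succ_succ, ih, cwH_succ_zero, pow_succ]; ring

/-- prepend a value -/
def cwCons (x : ℝ) (v : ℕ → ℝ) : ℕ → ℝ := fun n => Nat.casesOn n x v

@[simp] lemma cwCons_zero (x : ℝ) (v : ℕ → ℝ) : cwCons x v 0 = x := rfl
@[simp] lemma cwCons_succ (x : ℝ) (v : ℕ → ℝ) (n : ℕ) : cwCons x v (n+1) = v n := rfl

lemma cwH_cons (d n : ℕ) (x : ℝ) (v : ℕ → ℝ) :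
    cwH (d+1) (n+1) (cwCons x v) = x * cwH d (n+1) (cwCons x v) + cwH (d+1) n v := by
  rw [cwH_succ_succ]; rfl

lemma cwH_diff : ∀ (d n : ℕ) (x y : ℝ) (v : ℕ → ℝ),
    cwH (d+1) (n+1) (cwCons x v) - cwH (d+1) (n+1) (cwCons y v)
      = (x - y) * cwH d (n+2) (cwCons x (cwCons y v)) := by
  intro d
  induction d with
  | zero =>
    intro n x y v
    rw [cwH_cons 0 n x v, cwH_cons 0 n y v]
    simp
  | succ d ih =>
    intro n x y v
    rw [cwH_cons (d+1) n x v, cwH_cons (d+1) n y v, cwH_cons d (n+1) x (cwCons y v)]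
    linear_combination x * ih n x y v

lemma cwH_swap : ∀ (d n : ℕ) (x y : ℝ) (v : ℕ → ℝ),
    cwH d (n+2) (cwCons x (cwCons y v)) = cwH d (n+2) (cwCons y (cwCons x v)) := by
  intro d
  induction d with
  | zero => intro n x y v; simp
  | succ d ih =>
    intro n x y v
    rw [cwH_cons d (n+1) x (cwCons y v), cwH_cons d (n+1) y (cwCons x v)]
    have e : n + 1 + 1 = n + 2 := rfl
    rw [e]
    rw [ih n x y v]
    have hd := cwH_diff d n x y v
    rw [ih n x y v] at hd
    linear_combination -hd

lemma cwH_const : ∀ (d n : ℕ) (w : ℝ),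
    cwH d n (fun _ => w) = (Nat.choose (d + n - 1) d : ℝ) * w ^ d := by
  intro d
  induction d with
  | zero => intro n w; simp
  | succ d ih =>
    intro n
    induction n with
    | zero => intro w; simp
    | succ n ihn =>
      intro w
      rw [cwH_succ_succ, ih (n+1) w, ihn w]
      have e1 : (d + 1 + (n + 1) - 1) = (d + n) + 1 := by omega
      have e2 : (d + (n+1) - 1) = d + n := by omega
      have e3 : (d + 1 + n - 1) = d + n := by omega
      rw [e1, e2, e3, Nat.choose_succ_succ (d+n) d]
      push_cast
      ring

end CWaux

section CWaux3
open Finset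

lemma cwH_bound : ∀ (d n : ℕ) (u : ℕ → ℝ) (R : ℝ), 0 ≤ R → (∀ i < n, |u i| ≤ R) →
    |cwH d n u| ≤ (n : ℝ)^d * R^d := by
  intro d
  induction d with
  | zero => intro n u R hR _; simp
  | succ d ih =>
    intro n
    induction n with
    | zero => intro u R hR _; simp
    | succ n ihn =>
      intro u R hR h
      rw [cwH_succ_succ]
      have h0 : |u 0| ≤ R := h 0 (Nat.succ_pos n)
      have h1 : |cwH d (n+1) u| ≤ ((n:ℝ)+1)^d * R^d := by
        have := ih (n+1) u R hR h
        push_cast at this ⊢; linarith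
      have h2 : |cwH (d+1) n (fun i => u (i+1))| ≤ (n:ℝ)^(d+1) * R^(d+1) := by
        exact ihn (fun i => u (i+1)) R hR (fun i hi => h (i+1) (by omega))
      calc |u 0 * cwH d (n+1) u + cwH (d+1) n (fun i => u (i+1))|
          ≤ |u 0 * cwH d (n+1) u| + |cwH (d+1) n (fun i => u (i+1))| := abs_add_le _ _
        _ ≤ R * (((n:ℝ)+1)^d * R^d) + (n:ℝ)^(d+1) * R^(d+1) := by
            refine add_le_add ?_ h2
            rw [abs_mul]
            exact mul_le_mul h0 h1 (abs_nonneg _) hR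
        _ ≤ ((n:ℝ)+1)^(d+1) * R^(d+1) := by
            have hp : ((n:ℝ))^d ≤ ((n:ℝ)+1)^d := by
              apply pow_le_pow_left₀ (by positivity); linarith
            have hRd : (0:ℝ) ≤ R^d := by positivity
            have hnn : (0:ℝ) ≤ (n:ℝ) := by positivity
            have expand : ((n:ℝ)+1)^(d+1) = ((n:ℝ)+1)^d + (n:ℝ) * ((n:ℝ)+1)^d := by ring
            have e2 : (n:ℝ)^(d+1) = (n:ℝ) * (n:ℝ)^d := by ring
            have e3 : R^(d+1) = R * R^d := by ring
            rw [expand, e2, e3]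
            nlinarith [mul_le_mul_of_nonneg_left hp
              (by positivity : (0:ℝ) ≤ (n:ℝ) * (R * R^d)), hRd, hR, hnn]
      push_cast
      linarith

lemma cwH_continuous : ∀ (d n : ℕ), Continuous fun u : ℕ → ℝ => cwH d n u := by
  intro d
  induction d with
  | zero => intro n; simpa using continuous_const
  | succ d ih =>
    intro n
    induction n with
    | zero => simpa using continuous_const
    | succ n ihn =>
      have hrw : (fun u : ℕ → ℝ => cwH (d+1) (n+1) u)
          = fun u => u 0 * cwH d (n+1) u + cwH (d+1) n (fun i => u (i+1)) :=
        funext fun u => cwH_succ_succ d n u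
      rw [hrw]
      exact ((continuous_apply 0).mul (ih (n+1))).add
        (ihn.comp (continuous_pi fun i => continuous_apply (i+1)))

lemma cwNewton (mm : ℕ) : ∀ (r : ℕ) (u : ℕ → ℝ),
    ∑ s ∈ Finset.range (r+1),
      (if s ≤ mm then cwH (mm - s) (s+1) (fun t => u (s - t)) * ∏ t ∈ Finset.range s, (u r - u t)
       else 0)
    = (u r)^mm := by
  intro r
  induction r with
  | zero =>
    intro u
    rw [Finset.sum_range_one, if_pos (Nat.zero_le mm)]
    simp [cwH_one]
  | succ r ih =>
    intro u
    have hupd := ih (Function.update u r (u (r+1)))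
    have hur' : Function.update u r (u (r+1)) r = u (r+1) := Function.update_self _ _ _
    have hut : ∀ t, t ≠ r → Function.update u r (u (r+1)) t = u t :=
      fun t ht => Function.update_of_ne ht _ _
    rw [hur'] at hupd
    -- split sums
    rw [Finset.sum_range_succ, Finset.sum_range_succ]
    rw [Finset.sum_range_succ] at hupd
    have hpre : ∑ s ∈ Finset.range r,
        (if s ≤ mm then cwH (mm - s) (s+1) (fun t => u (s - t))
            * ∏ t ∈ Finset.range s, (u (r+1) - u t) else 0)
        = ∑ s ∈ Finset.range r,
          (if s ≤ mm then cwH (mm - s) (s+1) (fun t => Function.update u r (u (r+1)) (s - t))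
            * ∏ t ∈ Finset.range s, (u (r+1)
                - Function.update u r (u (r+1)) t) else 0) := by
      apply Finset.sum_congr rfl
      intro s hs
      have hsr : s < r := Finset.mem_range.mp hs
      by_cases hsm : s ≤ mm
      · rw [if_pos hsm, if_pos hsm]
        congr 1
        · apply cwH_congr
          intro i hi
          rw [hut (s - i) (by omega)]
        · apply Finset.prod_congr rfl
          intro t ht
          have htr := Finset.mem_range.mp ht
          rw [hut t (by omega : t ≠ r)]
      · rw [if_neg hsm, if_neg hsm]
    -- key step : G r + G (r+1) = F' r
    have hkey :
        (if r ≤ mm then cwH (mm - r) (r+1) (fun t => u (r - t))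
            * ∏ t ∈ Finset.range r, (u (r+1) - u t) else 0)
        + (if r+1 ≤ mm then cwH (mm - (r+1)) (r+1+1) (fun t => u (r+1 - t))
            * ∏ t ∈ Finset.range (r+1), (u (r+1) - u t) else 0)
        = (if r ≤ mm then cwH (mm - r) (r+1) (fun t => Function.update u r (u (r+1)) (r - t))
            * ∏ t ∈ Finset.range r, (u (r+1)
                - Function.update u r (u (r+1)) t) else 0) := by
      have hprodeq : ∏ t ∈ Finset.range r, (u (r+1)
          - Function.update u r (u (r+1)) t) = ∏ t ∈ Finset.range r, (u (r+1) - u t) := by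
        apply Finset.prod_congr rfl
        intro t ht
        rw [hut t (by have := Finset.mem_range.mp ht; omega)]
      by_cases hrm : r ≤ mm
      · by_cases hrm1 : r + 1 ≤ mm
        · rw [if_pos hrm, if_pos hrm1, if_pos hrm, hprodeq]
          set dd := mm - (r+1) with hdd
          have hmr : mm - r = dd + 1 := by omega
          set v : ℕ → ℝ := fun t => u (r - 1 - t) with hv
          have hA : cwH (mm - r) (r+1) (fun t => u (r - t))
              = cwH (dd+1) (r+1) (cwCons (u r) v) := by
            rw [hmr]
            apply cwH_congr
            intro i hi
            match i with
            | 0 => simp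
            | (t+1) =>
              show u (r - (t+1)) = v t
              rw [hv]
              congr 1
              omega
          have hB : cwH (mm - r) (r+1) (fun t => Function.update u r (u (r+1)) (r - t))
              = cwH (dd+1) (r+1) (cwCons (u (r+1)) v) := by
            rw [hmr]
            apply cwH_congr
            intro i hi
            match i with
            | 0 => simp [hur']
            | (t+1) =>
              show Function.update u r (u (r+1)) (r - (t+1)) = v t
              have htr : t < r := by omega
              rw [hut (r - (t+1)) (by omega)]
              show u (r - (t+1)) = u (r - 1 - t)
              congr 1
              omega
          have hX : cwH (mm - (r+1)) (r+1+1) (fun t => u (r+1 - t))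
              = cwH dd (r+2) (cwCons (u (r+1)) (cwCons (u r) v)) := by
            rw [← hdd]
            apply cwH_congr
            intro i hi
            match i with
            | 0 => simp
            | 1 => simp
            | (t+2) =>
              show u (r+1 - (t+2)) = v t
              rw [hv]
              congr 1
              omega
          rw [hA, hB, hX, Finset.prod_range_succ]
          have hd := cwH_diff dd r (u r) (u (r+1)) v
          rw [cwH_swap] at hd
          linear_combination (∏ t ∈ Finset.range r, (u (r+1) - u t)) * hd
        · -- mm = r
          have hmmr : mm = r := by omega
          rw [if_pos hrm, if_neg hrm1, if_pos hrm, hprodeq, hmmr]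
          simp
      · rw [if_neg hrm, if_neg hrm, if_neg (by omega : ¬ r + 1 ≤ mm)]
        simp
    rw [hpre]
    linarith [hupd, hkey]

end CWaux3

section CWF
open Finset

noncomputable def cwF (s : ℕ) (lam : ℝ) (v : ℕ → ℝ) : ℝ :=
  ∑' n : ℕ, lam^(n+s) / (Nat.factorial (n+s)) * cwH n (s+1) v

lemma cwF_bound (s : ℕ) (lam R : ℝ) (hR : 0 ≤ R) (n : ℕ) (v : ℕ → ℝ)
    (hv : ∀ i < s+1, |v i| ≤ R) :
    |lam^(n+s) / (Nat.factorial (n+s)) * cwH n (s+1) v|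
      ≤ |lam|^s * ((((s:ℝ)+1) * R * |lam|)^n / (Nat.factorial n)) := by
  have hfac : (0:ℝ) < (Nat.factorial (n+s) : ℝ) := by exact_mod_cast Nat.factorial_pos _
  have hfacn : (0:ℝ) < (Nat.factorial n : ℝ) := by exact_mod_cast Nat.factorial_pos _
  have h1 : |lam^(n+s) / (Nat.factorial (n+s)) * cwH n (s+1) v|
      ≤ (|lam|^(n+s) / (Nat.factorial (n+s))) * (((s:ℝ)+1)^n * R^n) := by
    rw [abs_mul, abs_div, abs_pow]
    have := cwH_bound n (s+1) v R hR hv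
    push_cast at this
    rw [abs_of_pos hfac]
    apply mul_le_mul le_rfl (le_trans this (by push_cast; linarith)) (abs_nonneg _)
    positivity
  refine h1.trans ?_
  have h2 : (|lam|^(n+s) / (Nat.factorial (n+s))) * (((s:ℝ)+1)^n * R^n)
      = (|lam|^s * (((s:ℝ)+1) * R * |lam|)^n) / (Nat.factorial (n+s)) := by
    rw [mul_pow, mul_pow, pow_add]
    ring
  rw [h2]
  have h3 : (|lam|^s * (((s:ℝ)+1) * R * |lam|)^n) / (Nat.factorial (n+s))
      ≤ (|lam|^s * (((s:ℝ)+1) * R * |lam|)^n) / (Nat.factorial n) := by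
    apply div_le_div_of_nonneg_left ?_ hfacn ?_
    · positivity
    · exact_mod_cast Nat.factorial_le (Nat.le_add_right n s)
  calc _ ≤ _ := h3
    _ = |lam|^s * ((((s:ℝ)+1) * R * |lam|)^n / (Nat.factorial n)) := by ring

lemma cwF_summable_of_bound (s : ℕ) (lam R : ℝ) (hR : 0 ≤ R) (v : ℕ → ℝ)
    (hv : ∀ i < s+1, |v i| ≤ R) :
    Summable (fun n : ℕ => lam^(n+s) / (Nat.factorial (n+s)) * cwH n (s+1) v) := by
  apply Summable.of_norm_bounded
    ((Real.summable_pow_div_factorial ((((s:ℝ)+1) * R * |lam|))).mul_left (|lam|^s))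
  intro n
  rw [Real.norm_eq_abs]
  exact cwF_bound s lam R hR n v hv

lemma cwF_summable (s : ℕ) (lam : ℝ) (v : ℕ → ℝ) :
    Summable (fun n : ℕ => lam^(n+s) / (Nat.factorial (n+s)) * cwH n (s+1) v) := by
  apply cwF_summable_of_bound s lam (∑ i ∈ Finset.range (s+1), |v i|)
    (Finset.sum_nonneg fun i _ => abs_nonneg _)
  intro i hi
  exact Finset.single_le_sum (fun j _ => abs_nonneg (v j)) (Finset.mem_range.mpr hi)

lemma cwF_continuousOn (s : ℕ) (lam R : ℝ) (hR : 0 ≤ R) :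
    ContinuousOn (cwF s lam) {v : ℕ → ℝ | ∀ i < s+1, |v i| ≤ R} := by
  apply continuousOn_tsum
    (u := fun n => |lam|^s * ((((s:ℝ)+1) * R * |lam|)^n / (Nat.factorial n)))
  · intro n
    exact (continuous_const.mul (cwH_continuous n (s+1))).continuousOn
  · exact (Real.summable_pow_div_factorial _).mul_left _
  · intro n v hv
    rw [Real.norm_eq_abs]
    exact cwF_bound s lam R hR n v hv

lemma cwF_const (s : ℕ) (lam w : ℝ) :
    cwF s lam (fun _ => w) = lam^s * Real.exp (lam * w) / (Nat.factorial s) := by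
  have hterm : ∀ n : ℕ, lam^(n+s) / (Nat.factorial (n+s)) * cwH n (s+1) (fun _ => w)
      = (lam^s / (Nat.factorial s)) * ((lam*w)^n / (Nat.factorial n)) := by
    intro n
    rw [cwH_const]
    have e : n + (s+1) - 1 = n + s := by omega
    rw [e]
    have hfact : ((Nat.factorial (n+s)) : ℝ)
        = (Nat.choose (n+s) n : ℝ) * (Nat.factorial n) * (Nat.factorial s) := by
      have := Nat.choose_mul_factorial_mul_factorial (Nat.le_add_right n s)
      have e2 : n + s - n = s := by omega
      rw [e2] at this
      exact_mod_cast this.symm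
    have hfac1 : ((Nat.factorial (n+s)) : ℝ) ≠ 0 := by exact_mod_cast (Nat.factorial_pos _).ne'
    have hfac2 : ((Nat.factorial n) : ℝ) ≠ 0 := by exact_mod_cast (Nat.factorial_pos _).ne'
    have hfac3 : ((Nat.factorial s) : ℝ) ≠ 0 := by exact_mod_cast (Nat.factorial_pos _).ne'
    have hch : (Nat.choose (n+s) n : ℝ) ≠ 0 := by
      exact_mod_cast (Nat.choose_pos (Nat.le_add_right n s)).ne'
    field_simp
    rw [hfact]
    ring
  unfold cwF
  rw [tsum_congr hterm, tsum_mul_left, Real.exp_eq_exp_ℝ, NormedSpace.exp_eq_tsum_div]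
  ring

lemma cwF_newton (lam : ℝ) (r : ℕ) (u : ℕ → ℝ) :
    Real.exp (lam * u r) = ∑ s ∈ Finset.range (r+1),
      cwF s lam (fun t => u (s - t)) * ∏ t ∈ Finset.range s, (u r - u t) := by
  have hsum : ∀ s, Summable (fun mm : ℕ => if s ≤ mm then lam^mm / (Nat.factorial mm) *
      (cwH (mm - s) (s+1) (fun t => u (s - t)) * ∏ t ∈ Finset.range s, (u r - u t)) else 0) := by
    intro s
    rw [← summable_nat_add_iff s]
    have : (fun n : ℕ => if s ≤ n + s then lam^(n+s) / (Nat.factorial (n+s)) *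
        (cwH (n + s - s) (s+1) (fun t => u (s - t)) * ∏ t ∈ Finset.range s, (u r - u t)) else 0)
        = fun n : ℕ => (lam^(n+s) / (Nat.factorial (n+s)) *
          cwH n (s+1) (fun t => u (s - t))) * ∏ t ∈ Finset.range s, (u r - u t) := by
      funext n
      rw [if_pos (Nat.le_add_left s n), Nat.add_sub_cancel]
      ring
    rw [this]
    exact (cwF_summable s lam _).mul_right _
  have hexp : Real.exp (lam * u r) = ∑' mm : ℕ, lam^mm / (Nat.factorial mm) * (u r)^mm := by
    rw [Real.exp_eq_exp_ℝ, NormedSpace.exp_eq_tsum_div]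
    apply tsum_congr
    intro mm
    rw [mul_pow]
    ring
  have hterm : ∀ mm : ℕ, lam^mm / (Nat.factorial mm) * (u r)^mm
      = ∑ s ∈ Finset.range (r+1), (if s ≤ mm then lam^mm / (Nat.factorial mm) *
        (cwH (mm - s) (s+1) (fun t => u (s - t)) * ∏ t ∈ Finset.range s, (u r - u t)) else 0) := by
    intro mm
    rw [← cwNewton mm r u, Finset.mul_sum]
    apply Finset.sum_congr rfl
    intro s _
    rw [mul_ite, mul_zero]
  rw [hexp, tsum_congr hterm, Summable.tsum_finsetSum (fun s _ => hsum s)]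
  apply Finset.sum_congr rfl
  intro s _
  rw [← (hsum s).sum_add_tsum_nat_add s]
  have hzero : ∑ i ∈ Finset.range s, (if s ≤ i then lam^i / (Nat.factorial i) *
      (cwH (i - s) (s+1) (fun t => u (s - t)) * ∏ t ∈ Finset.range s, (u r - u t)) else 0) = 0 := by
    apply Finset.sum_eq_zero
    intro i hi
    rw [if_neg (by have := Finset.mem_range.mp hi; omega)]
  rw [hzero, zero_add]
  have : ∀ n : ℕ, (if s ≤ n + s then lam^(n+s) / (Nat.factorial (n+s)) *
      (cwH (n + s - s) (s+1) (fun t => u (s - t)) * ∏ t ∈ Finset.range s, (u r - u t)) else 0)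
      = (lam^(n+s) / (Nat.factorial (n+s)) * cwH n (s+1) (fun t => u (s - t)))
        * ∏ t ∈ Finset.range s, (u r - u t) := by
    intro n
    rw [if_pos (Nat.le_add_left s n), Nat.add_sub_cancel]
    ring
  rw [tsum_congr this, tsum_mul_right]
  rfl

end CWF

section CWmat
open Finset Matrix

variable {m L k : ℕ}

/-- extend a tuple by `w` -/
noncomputable def cwUE (L : ℕ) (w : ℝ) (u : Fin L → ℝ) : ℕ → ℝ :=
  fun n => if h : n < L then u ⟨n, h⟩ else w

lemma cwUE_const (L : ℕ) (w : ℝ) : cwUE L w (fun _ => w) = fun _ => w := by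
  funext n; unfold cwUE; split_ifs <;> rfl

noncomputable def cwX (m L k : ℕ) (w : ℝ) (wf : Fin m → ℝ) (u : Fin L → ℝ) (j : Fin m) : ℝ :=
  if k ≤ (j:ℕ) ∧ (j:ℕ) < k + L then cwUE L w u ((j:ℕ) - k) else wf j

noncomputable def cwM (m L k : ℕ) (lam : Fin m → ℝ) (w : ℝ) (wf : Fin m → ℝ) (u : Fin L → ℝ) :
    Matrix (Fin m) (Fin m) ℝ :=
  Matrix.of fun i j =>
    if k ≤ (j:ℕ) ∧ (j:ℕ) < k + L then
      cwF ((j:ℕ)-k) (lam i) (fun t => cwUE L w u ((j:ℕ)-k-t))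
    else Real.exp (lam i * wf j)

noncomputable def cwT (m L k : ℕ) (w : ℝ) (u : Fin L → ℝ) : Matrix (Fin m) (Fin m) ℝ :=
  Matrix.of fun s j =>
    if (k ≤ (s:ℕ) ∧ (s:ℕ) < k+L) ∧ (k ≤ (j:ℕ) ∧ (j:ℕ) < k+L) then
      (if (s:ℕ) ≤ (j:ℕ) then
        ∏ t ∈ Finset.range ((s:ℕ)-k), (cwUE L w u ((j:ℕ)-k) - cwUE L w u t) else 0)
    else (if s = j then 1 else 0)

lemma cwA_factor (hkL : k + L ≤ m) (lam : Fin m → ℝ) (w : ℝ) (wf : Fin m → ℝ) (u : Fin L → ℝ) :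
    (Matrix.of fun i j => Real.exp (lam i * cwX m L k w wf u j))
      = cwM m L k lam w wf u * cwT m L k w u := by
  ext i j
  rw [Matrix.mul_apply]
  by_cases hj : k ≤ (j:ℕ) ∧ (j:ℕ) < k + L
  · -- block column : Newton expansion
    have hnewton := cwF_newton (lam i) ((j:ℕ)-k) (cwUE L w u)
    have hx : cwX m L k w wf u j = cwUE L w u ((j:ℕ)-k) := by rw [cwX, if_pos hj]
    rw [Matrix.of_apply, hx, hnewton]
    rw [← Finset.sum_filter_add_sum_filter_not Finset.univ
      (fun s : Fin m => (k ≤ (s:ℕ) ∧ (s:ℕ) < k+L) ∧ (s:ℕ) ≤ (j:ℕ))]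
    have hzero : ∑ s ∈ Finset.univ.filter
        (fun s : Fin m => ¬((k ≤ (s:ℕ) ∧ (s:ℕ) < k+L) ∧ (s:ℕ) ≤ (j:ℕ))),
        cwM m L k lam w wf u i s * cwT m L k w u s j = 0 := by
      apply Finset.sum_eq_zero
      intro s hs
      rw [Finset.mem_filter] at hs
      have hs' := hs.2
      have : cwT m L k w u s j = 0 := by
        rw [cwT, Matrix.of_apply]
        by_cases hsb : k ≤ (s:ℕ) ∧ (s:ℕ) < k+L
        · rw [if_pos ⟨hsb, hj⟩, if_neg (by tauto)]
        · rw [if_neg (by tauto), if_neg (by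
            intro hsj
            exact hsb (hsj ▸ hj))]
      rw [this, mul_zero]
    rw [hzero, add_zero]
    have hbij : ∑ s ∈ Finset.univ.filter
        (fun s : Fin m => (k ≤ (s:ℕ) ∧ (s:ℕ) < k+L) ∧ (s:ℕ) ≤ (j:ℕ)),
        cwM m L k lam w wf u i s * cwT m L k w u s j
        = ∑ r ∈ Finset.range ((j:ℕ)-k+1),
          cwF r (lam i) (fun t => cwUE L w u (r - t))
            * ∏ t ∈ Finset.range r, (cwUE L w u ((j:ℕ)-k) - cwUE L w u t) := by
      refine Finset.sum_bij'
        (fun (s : Fin m) (_ : s ∈ Finset.univ.filter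
          (fun s : Fin m => (k ≤ (s:ℕ) ∧ (s:ℕ) < k+L) ∧ (s:ℕ) ≤ (j:ℕ))) => (s:ℕ) - k)
        (fun (r : ℕ) (hr : r ∈ Finset.range ((j:ℕ)-k+1)) =>
          (⟨k + r, by have := Finset.mem_range.mp hr; omega⟩ : Fin m))
        ?_ ?_ ?_ ?_ ?_
      · intro s hs
        rw [Finset.mem_filter] at hs
        rw [Finset.mem_range]
        show (s:ℕ) - k < (j:ℕ) - k + 1
        omega
      · intro r hr
        have hrL := Finset.mem_range.mp hr
        rw [Finset.mem_filter]
        refine ⟨Finset.mem_univ _, ?_, ?_⟩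
        · show k ≤ k + r ∧ k + r < k + L
          omega
        · show k + r ≤ (j:ℕ)
          omega
      · intro s hs
        rw [Finset.mem_filter] at hs
        apply Fin.ext
        show k + ((s:ℕ) - k) = (s:ℕ)
        omega
      · intro r hr
        show ((⟨k + r, _⟩ : Fin m) : ℕ) - k = r
        simp
      · intro s hs
        rw [Finset.mem_filter] at hs
        simp only [cwM, cwT, Matrix.of_apply]
        rw [if_pos hs.2.1, if_pos ⟨hs.2.1, hj⟩, if_pos hs.2.2]
    rw [hbij]
  · -- non-block column
    have hx : cwX m L k w wf u j = wf j := by rw [cwX, if_neg hj]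
    rw [Matrix.of_apply, hx]
    rw [Finset.sum_eq_single j]
    · rw [cwM, cwT, Matrix.of_apply, Matrix.of_apply, if_neg hj,
        if_neg (by tauto), if_pos rfl, mul_one]
    · intro s _ hsj
      have : cwT m L k w u s j = 0 := by
        rw [cwT, Matrix.of_apply, if_neg (by tauto), if_neg hsj]
      rw [this, mul_zero]
    · intro h
      exact absurd (Finset.mem_univ j) h

lemma cwT_det (hkL : k + L ≤ m) (w : ℝ) (u : Fin L → ℝ) :
    (cwT m L k w u).det
      = ∏ r ∈ Finset.range L, ∏ t ∈ Finset.range r, (cwUE L w u r - cwUE L w u t) := by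
  rw [Matrix.det_of_upperTriangular (M := cwT m L k w u) (by
    intro i j hij
    rw [cwT, Matrix.of_apply]
    by_cases hb : (k ≤ (i:ℕ) ∧ (i:ℕ) < k+L) ∧ (k ≤ (j:ℕ) ∧ (j:ℕ) < k+L)
    · rw [if_pos hb, if_neg (by
        have : (j:ℕ) < (i:ℕ) := hij
        omega)]
    · rw [if_neg hb, if_neg (by
        intro h
        exact absurd h (Fin.ne_of_gt hij))])]
  rw [← Finset.prod_filter_mul_prod_filter_not Finset.univ
    (fun s : Fin m => k ≤ (s:ℕ) ∧ (s:ℕ) < k+L)]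
  have hone : ∏ s ∈ Finset.univ.filter (fun s : Fin m => ¬(k ≤ (s:ℕ) ∧ (s:ℕ) < k+L)),
      cwT m L k w u s s = 1 := by
    apply Finset.prod_eq_one
    intro s hs
    rw [Finset.mem_filter] at hs
    rw [cwT, Matrix.of_apply, if_neg (by tauto), if_pos rfl]
  rw [hone, mul_one]
  have hbij : ∏ s ∈ Finset.univ.filter (fun s : Fin m => k ≤ (s:ℕ) ∧ (s:ℕ) < k+L),
      cwT m L k w u s s
      = ∏ r ∈ Finset.range L, ∏ t ∈ Finset.range r, (cwUE L w u r - cwUE L w u t) := by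
    refine Finset.prod_bij'
      (fun (s : Fin m) (_ : s ∈ Finset.univ.filter
        (fun s : Fin m => k ≤ (s:ℕ) ∧ (s:ℕ) < k+L)) => (s:ℕ) - k)
      (fun (r : ℕ) (hr : r ∈ Finset.range L) =>
        (⟨k + r, by have := Finset.mem_range.mp hr; omega⟩ : Fin m))
      ?_ ?_ ?_ ?_ ?_
    · intro s hs
      rw [Finset.mem_filter] at hs
      rw [Finset.mem_range]
      show (s:ℕ) - k < L
      omega
    · intro r hr
      have hrL := Finset.mem_range.mp hr
      rw [Finset.mem_filter]
      refine ⟨Finset.mem_univ _, ?_⟩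
      show k ≤ k + r ∧ k + r < k + L
      omega
    · intro s hs
      rw [Finset.mem_filter] at hs
      apply Fin.ext
      show k + ((s:ℕ) - k) = (s:ℕ)
      omega
    · intro r hr
      show ((⟨k + r, _⟩ : Fin m) : ℕ) - k = r
      simp
    · intro s hs
      rw [Finset.mem_filter] at hs
      simp only [cwT, Matrix.of_apply]
      rw [if_pos ⟨hs.2, hs.2⟩, if_pos le_rfl]
  rw [hbij]

end CWmat

section CWsign
open Finset Matrix

variable {m L k : ℕ}

lemma cw_det_continuous {N : ℕ} :
    Continuous fun A : Matrix (Fin N) (Fin N) ℝ => A.det := by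
  have : (fun A : Matrix (Fin N) (Fin N) ℝ => A.det)
      = fun A : Matrix (Fin N) (Fin N) ℝ =>
        ∑ σ : Equiv.Perm (Fin N), ((Equiv.Perm.sign σ : ℤ) : ℝ) * ∏ i, A (σ i) i := by
    funext A
    rw [Matrix.det_apply']
  rw [this]
  apply continuous_finset_sum
  intro σ _
  exact continuous_const.mul
    (continuous_finset_prod _ fun i _ => (continuous_apply i).comp (continuous_apply (σ i)))

lemma cw_prod_pairs {N : ℕ} (f : Fin N → Fin N → ℝ) :
    ∏ p ∈ Finset.univ.filter (fun p : Fin N × Fin N => p.1 < p.2), f p.1 p.2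
      = ∏ i : Fin N, ∏ j ∈ Finset.Ioi i, f i j := by
  rw [Finset.prod_sigma']
  refine Finset.prod_bij'
    (fun (p : Fin N × Fin N) (_ : p ∈ Finset.univ.filter fun p : Fin N × Fin N => p.1 < p.2)
      => (⟨p.1, p.2⟩ : Σ _ : Fin N, Fin N))
    (fun (q : Σ _ : Fin N, Fin N) (_ : q ∈ Finset.univ.sigma fun i => Finset.Ioi i) => (q.1, q.2))
    ?_ ?_ ?_ ?_ ?_
  · intro p hp
    rw [Finset.mem_filter] at hp
    rw [Finset.mem_sigma]
    exact ⟨Finset.mem_univ _, Finset.mem_Ioi.mpr hp.2⟩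
  · intro q hq
    rw [Finset.mem_sigma] at hq
    rw [Finset.mem_filter]
    exact ⟨Finset.mem_univ _, Finset.mem_Ioi.mp hq.2⟩
  · intro q _; rfl
  · intro p _; rfl
  · intro q _; rfl

lemma cw_block_reindex (hL : 0 < L) (hkL : k + L ≤ m) (g : ℕ → ℝ) :
    ∏ s ∈ Finset.univ.filter (fun s : Fin m => k ≤ (s:ℕ) ∧ (s:ℕ) < k+L), g ((s:ℕ)-k)
      = ∏ r ∈ Finset.range L, g r := by
  refine Finset.prod_bij'
    (fun (s : Fin m) (_ : s ∈ Finset.univ.filter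
      (fun s : Fin m => k ≤ (s:ℕ) ∧ (s:ℕ) < k+L)) => (s:ℕ) - k)
    (fun (r : ℕ) (hr : r ∈ Finset.range L) =>
      (⟨k + r, by have := Finset.mem_range.mp hr; omega⟩ : Fin m)) ?_ ?_ ?_ ?_ ?_
  · intro s hs
    rw [Finset.mem_filter] at hs
    rw [Finset.mem_range]
    show (s:ℕ) - k < L
    omega
  · intro r hr
    have := Finset.mem_range.mp hr
    rw [Finset.mem_filter]
    refine ⟨Finset.mem_univ _, ?_⟩
    show k ≤ k + r ∧ k + r < k + L
    omega
  · intro s hs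
    rw [Finset.mem_filter] at hs
    apply Fin.ext
    show k + ((s:ℕ) - k) = (s:ℕ)
    omega
  · intro r hr
    show ((⟨k + r, _⟩ : Fin m) : ℕ) - k = r
    simp
  · intro s hs
    rfl

lemma cw_blockpairs (hkL : k + L ≤ m) (g : ℕ → ℕ → ℝ) :
    ∏ p ∈ Finset.univ.filter (fun p : Fin m × Fin m => p.1 < p.2 ∧
        ((k ≤ (p.1:ℕ) ∧ (p.1:ℕ) < k+L) ∧ (k ≤ (p.2:ℕ) ∧ (p.2:ℕ) < k+L))),
      g ((p.1:ℕ)-k) ((p.2:ℕ)-k)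
      = ∏ r ∈ Finset.range L, ∏ t ∈ Finset.range r, g t r := by
  rw [Finset.prod_sigma']
  refine Finset.prod_bij'
    (fun (p : Fin m × Fin m) (_ : p ∈ Finset.univ.filter (fun p : Fin m × Fin m => p.1 < p.2 ∧
        ((k ≤ (p.1:ℕ) ∧ (p.1:ℕ) < k+L) ∧ (k ≤ (p.2:ℕ) ∧ (p.2:ℕ) < k+L))))
      => (⟨(p.2:ℕ)-k, (p.1:ℕ)-k⟩ : Σ _ : ℕ, ℕ))
    (fun (q : Σ _ : ℕ, ℕ) (hq : q ∈ (Finset.range L).sigma fun r => Finset.range r) =>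
      ((⟨k + q.2, by
          rw [Finset.mem_sigma, Finset.mem_range, Finset.mem_range] at hq
          omega⟩ : Fin m),
       (⟨k + q.1, by
          rw [Finset.mem_sigma, Finset.mem_range, Finset.mem_range] at hq
          omega⟩ : Fin m))) ?_ ?_ ?_ ?_ ?_
  · intro p hp
    rw [Finset.mem_filter] at hp
    rw [Finset.mem_sigma, Finset.mem_range, Finset.mem_range]
    have h1 : (p.1:ℕ) < (p.2:ℕ) := hp.2.1
    constructor
    · show (p.2:ℕ) - k < L
      omega
    · show (p.1:ℕ) - k < (p.2:ℕ) - k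
      omega
  · intro q hq
    rw [Finset.mem_sigma, Finset.mem_range, Finset.mem_range] at hq
    rw [Finset.mem_filter]
    refine ⟨Finset.mem_univ _, ?_, ?_, ?_⟩
    · show (⟨k + q.2, _⟩ : Fin m) < (⟨k + q.1, _⟩ : Fin m)
      rw [Fin.lt_def]
      show k + q.2 < k + q.1
      omega
    · show k ≤ k + q.2 ∧ k + q.2 < k + L
      omega
    · show k ≤ k + q.1 ∧ k + q.1 < k + L
      omega
  · intro p hp
    rw [Finset.mem_filter] at hp
    have h1 : (p.1:ℕ) < (p.2:ℕ) := hp.2.1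
    have hb1 := hp.2.2.1
    have hb2 := hp.2.2.2
    ext
    · show k + ((p.1:ℕ) - k) = (p.1:ℕ)
      omega
    · show k + ((p.2:ℕ) - k) = (p.2:ℕ)
      omega
  · intro q hq
    rw [Finset.mem_sigma, Finset.mem_range, Finset.mem_range] at hq
    have : ((⟨k + q.2, by omega⟩ : Fin m) : ℕ) = k + q.2 := rfl
    refine Sigma.ext ?_ ?_
    · show ((⟨k + q.1, _⟩ : Fin m) : ℕ) - k = q.1
      simp
    · simp
  · intro p hp
    rfl

/-- block-reversal permutation -/
noncomputable def cwRho (m L k : ℕ) (hkL : k + L ≤ m) : Equiv.Perm (Fin m) :=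
  Function.Involutive.toPerm
    (fun j => if h : k ≤ (j:ℕ) ∧ (j:ℕ) < k + L then
        (⟨k + (L - 1 - ((j:ℕ) - k)), by omega⟩ : Fin m) else j)
    (by
      intro j
      beta_reduce
      by_cases h : k ≤ (j:ℕ) ∧ (j:ℕ) < k + L
      · rw [dif_pos h]
        beta_reduce
        have h2 : k ≤ k + (L - 1 - ((j:ℕ) - k)) ∧ k + (L - 1 - ((j:ℕ) - k)) < k + L := by
          constructor
          · omega
          · show k + (L - 1 - ((j:ℕ) - k)) < k + L
            omega
        rw [dif_pos h2]
        apply Fin.ext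
        show k + (L - 1 - ((k + (L - 1 - ((j:ℕ) - k))) - k)) = (j:ℕ)
        omega
      · rw [dif_neg h]
        beta_reduce
        rw [dif_neg h])

lemma cwRho_block (hkL : k + L ≤ m) (j : Fin m) (h : k ≤ (j:ℕ) ∧ (j:ℕ) < k + L) :
    ((cwRho m L k hkL j : Fin m) : ℕ) = k + (L - 1 - ((j:ℕ) - k)) := by
  show ((if h : k ≤ (j:ℕ) ∧ (j:ℕ) < k + L then _ else j : Fin m) : ℕ) = _
  rw [dif_pos h]

lemma cwRho_nonblock (hkL : k + L ≤ m) (j : Fin m) (h : ¬(k ≤ (j:ℕ) ∧ (j:ℕ) < k + L)) :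
    cwRho m L k hkL j = j := by
  show (if h : k ≤ (j:ℕ) ∧ (j:ℕ) < k + L then _ else j : Fin m) = _
  rw [dif_neg h]

lemma cwRho_mem_block_iff (hkL : k + L ≤ m) (j : Fin m) :
    (k ≤ ((cwRho m L k hkL j : Fin m) : ℕ) ∧ ((cwRho m L k hkL j : Fin m) : ℕ) < k + L)
      ↔ (k ≤ (j:ℕ) ∧ (j:ℕ) < k + L) := by
  by_cases h : k ≤ (j:ℕ) ∧ (j:ℕ) < k + L
  · rw [cwRho_block hkL j h]
    constructor
    · intro _; exact h
    · intro _; omega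
  · rw [cwRho_nonblock hkL j h]

lemma cwRho_invol (hkL : k + L ≤ m) (j : Fin m) :
    cwRho m L k hkL (cwRho m L k hkL j) = j := by
  by_cases h : k ≤ (j:ℕ) ∧ (j:ℕ) < k + L
  · have h1 := cwRho_block hkL j h
    have h2 : k ≤ ((cwRho m L k hkL j : Fin m) : ℕ) ∧ ((cwRho m L k hkL j : Fin m) : ℕ) < k + L :=
      (cwRho_mem_block_iff hkL j).mpr h
    have h3 := cwRho_block hkL _ h2
    apply Fin.ext
    rw [h3, h1]
    omega
  · rw [cwRho_nonblock hkL j h, cwRho_nonblock hkL j h]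

lemma cw_csign_sq (L : ℕ) :
    (∏ r ∈ Finset.range L, ∏ t ∈ Finset.range r, (-1 : ℝ))
      * (∏ r ∈ Finset.range L, ∏ t ∈ Finset.range r, (-1 : ℝ)) = 1 := by
  rw [← Finset.prod_mul_distrib]
  apply Finset.prod_eq_one
  intro r _
  rw [Finset.prod_const, ← mul_pow]
  norm_num

lemma cw_csign_ne (L : ℕ) :
    (∏ r ∈ Finset.range L, ∏ t ∈ Finset.range r, (-1 : ℝ)) ≠ 0 := by
  intro h
  have := cw_csign_sq L
  rw [h] at this
  norm_num at this

lemma cwRho_sign (hkL : k + L ≤ m) :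
    ((Equiv.Perm.sign (cwRho m L k hkL) : ℤ) : ℝ)
      = ∏ r ∈ Finset.range L, ∏ t ∈ Finset.range r, (-1 : ℝ) := by
  classical
  set ρ := cwRho m L k hkL with hρ
  set v : Fin m → ℝ := fun j => ((j:ℕ) : ℝ) with hv
  have hperm := Matrix.det_permute ρ (Matrix.vandermonde v)
  have hsub : (Matrix.vandermonde v).submatrix ρ id = Matrix.vandermonde (fun i => v (ρ i)) := by
    ext i j
    simp [Matrix.vandermonde_apply, Matrix.submatrix_apply]
  rw [hsub, Matrix.det_vandermonde, Matrix.det_vandermonde] at hperm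
  rw [← cw_prod_pairs (fun i j => v (ρ j) - v (ρ i)), ← cw_prod_pairs (fun i j => v j - v i)]
    at hperm
  set both := fun p : Fin m × Fin m =>
    (k ≤ (p.1:ℕ) ∧ (p.1:ℕ) < k+L) ∧ (k ≤ (p.2:ℕ) ∧ (p.2:ℕ) < k+L) with hboth
  have hsplit1 : ∏ p ∈ Finset.univ.filter (fun p : Fin m × Fin m => p.1 < p.2),
      (v (ρ p.2) - v (ρ p.1))
      = (∏ p ∈ (Finset.univ.filter (fun p : Fin m × Fin m => p.1 < p.2)).filter both,
          (v (ρ p.2) - v (ρ p.1)))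
        * ∏ p ∈ (Finset.univ.filter (fun p : Fin m × Fin m => p.1 < p.2)).filter
            (fun p => ¬ both p), (v (ρ p.2) - v (ρ p.1)) :=
    (Finset.prod_filter_mul_prod_filter_not _ both _).symm
  have hsplit2 : ∏ p ∈ Finset.univ.filter (fun p : Fin m × Fin m => p.1 < p.2),
      (v p.2 - v p.1)
      = (∏ p ∈ (Finset.univ.filter (fun p : Fin m × Fin m => p.1 < p.2)).filter both,
          (v p.2 - v p.1))
        * ∏ p ∈ (Finset.univ.filter (fun p : Fin m × Fin m => p.1 < p.2)).filter
            (fun p => ¬ both p), (v p.2 - v p.1) :=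
    (Finset.prod_filter_mul_prod_filter_not _ both _).symm
  rw [hsplit1, hsplit2] at hperm
  -- the block part changes sign
  have hA : ∏ p ∈ (Finset.univ.filter (fun p : Fin m × Fin m => p.1 < p.2)).filter both,
      (v (ρ p.2) - v (ρ p.1))
      = (∏ r ∈ Finset.range L, ∏ t ∈ Finset.range r, (-1:ℝ))
        * ∏ p ∈ (Finset.univ.filter (fun p : Fin m × Fin m => p.1 < p.2)).filter both,
          (v p.2 - v p.1) := by
    have hpt : ∀ p ∈ (Finset.univ.filter (fun p : Fin m × Fin m => p.1 < p.2)).filter both,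
        v (ρ p.2) - v (ρ p.1) = (-1) * (v p.2 - v p.1) := by
      intro p hp
      rw [Finset.mem_filter, Finset.mem_filter] at hp
      obtain ⟨⟨-, hlt⟩, hb1, hb2⟩ := hp
      have e1 := cwRho_block hkL p.1 hb1
      have e2 := cwRho_block hkL p.2 hb2
      have hlt' : (p.1:ℕ) < (p.2:ℕ) := hlt
      have enat : ((ρ p.2 : Fin m) : ℕ) + (p.2:ℕ) = ((ρ p.1 : Fin m) : ℕ) + (p.1:ℕ) := by
        rw [e1, e2]; omega
      have ecast : (((ρ p.2 : Fin m) : ℕ) : ℝ) + ((p.2:ℕ) : ℝ)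
          = (((ρ p.1 : Fin m) : ℕ) : ℝ) + ((p.1:ℕ) : ℝ) := by exact_mod_cast enat
      show (((ρ p.2 : Fin m) : ℕ) : ℝ) - (((ρ p.1 : Fin m) : ℕ) : ℝ)
        = (-1) * (((p.2:ℕ) : ℝ) - ((p.1:ℕ) : ℝ))
      linarith
    rw [Finset.prod_congr rfl hpt, Finset.prod_mul_distrib]
    congr 1
    rw [Finset.filter_filter]
    exact cw_blockpairs hkL (fun _ _ => (-1:ℝ))
  have hB : ∏ p ∈ (Finset.univ.filter (fun p : Fin m × Fin m => p.1 < p.2)).filter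
        (fun p => ¬ both p), (v (ρ p.2) - v (ρ p.1))
      = ∏ p ∈ (Finset.univ.filter (fun p : Fin m × Fin m => p.1 < p.2)).filter
        (fun p => ¬ both p), (v p.2 - v p.1) := by
    have hmap : ∀ p : Fin m × Fin m, p.1 < p.2 → ¬ both p →
        (ρ p.1 < ρ p.2 ∧ ¬ both (ρ p.1, ρ p.2)) := by
      intro p hlt hnb
      have hlt' : (p.1:ℕ) < (p.2:ℕ) := hlt
      simp only [hboth] at hnb
      by_cases h1 : k ≤ (p.1:ℕ) ∧ (p.1:ℕ) < k + L
      · have h2 : ¬(k ≤ (p.2:ℕ) ∧ (p.2:ℕ) < k + L) := fun h2 => hnb ⟨h1, h2⟩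
        have e1 := cwRho_block hkL p.1 h1
        have e2 := cwRho_nonblock hkL p.2 h2
        constructor
        · rw [Fin.lt_def, e1, e2]
          omega
        · intro hb
          simp only [hboth] at hb
          have := hb.2
          rw [e2] at this
          exact h2 this
      · have e1 := cwRho_nonblock hkL p.1 h1
        by_cases h2 : k ≤ (p.2:ℕ) ∧ (p.2:ℕ) < k + L
        · have e2 := cwRho_block hkL p.2 h2
          constructor
          · rw [Fin.lt_def, e1, e2]
            omega
          · intro hb
            simp only [hboth] at hb
            have := hb.1
            rw [e1] at this
            exact h1 this
        · have e2 := cwRho_nonblock hkL p.2 h2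
          rw [e1, e2]
          exact ⟨hlt, fun hb => h1 (by simp only [hboth] at hb; exact hb.1)⟩
    refine Finset.prod_bij'
      (fun (p : Fin m × Fin m) (_ : p ∈ (Finset.univ.filter
        (fun p : Fin m × Fin m => p.1 < p.2)).filter (fun p => ¬ both p))
        => (ρ p.1, ρ p.2))
      (fun (p : Fin m × Fin m) (_ : p ∈ (Finset.univ.filter
        (fun p : Fin m × Fin m => p.1 < p.2)).filter (fun p => ¬ both p))
        => (ρ p.1, ρ p.2)) ?_ ?_ ?_ ?_ ?_
    · intro p hp
      rw [Finset.mem_filter, Finset.mem_filter] at hp ⊢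
      obtain ⟨⟨-, hlt⟩, hnb⟩ := hp
      obtain ⟨ho, hnb'⟩ := hmap p hlt hnb
      exact ⟨⟨Finset.mem_univ _, ho⟩, hnb'⟩
    · intro p hp
      rw [Finset.mem_filter, Finset.mem_filter] at hp ⊢
      obtain ⟨⟨-, hlt⟩, hnb⟩ := hp
      obtain ⟨ho, hnb'⟩ := hmap p hlt hnb
      exact ⟨⟨Finset.mem_univ _, ho⟩, hnb'⟩
    · intro p _
      show (ρ (ρ p.1), ρ (ρ p.2)) = p
      rw [hρ, cwRho_invol hkL, cwRho_invol hkL]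
    · intro p _
      show (ρ (ρ p.1), ρ (ρ p.2)) = p
      rw [hρ, cwRho_invol hkL, cwRho_invol hkL]
    · intro p _
      rfl
  rw [hA, hB] at hperm
  have hBne : ∏ p ∈ (Finset.univ.filter (fun p : Fin m × Fin m => p.1 < p.2)).filter both,
      (v p.2 - v p.1) ≠ 0 := by
    apply Finset.prod_ne_zero_iff.mpr
    intro p hp
    rw [Finset.mem_filter, Finset.mem_filter] at hp
    have hlt : (p.1:ℕ) < (p.2:ℕ) := hp.1.2
    have : ((p.1:ℕ):ℝ) < ((p.2:ℕ):ℝ) := by exact_mod_cast hlt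
    show ((p.2:ℕ):ℝ) - ((p.1:ℕ):ℝ) ≠ 0
    linarith
  have hQne : ∏ p ∈ (Finset.univ.filter (fun p : Fin m × Fin m => p.1 < p.2)).filter
      (fun p => ¬ both p), (v p.2 - v p.1) ≠ 0 := by
    apply Finset.prod_ne_zero_iff.mpr
    intro p hp
    rw [Finset.mem_filter, Finset.mem_filter] at hp
    have hlt : (p.1:ℕ) < (p.2:ℕ) := hp.1.2
    have : ((p.1:ℕ):ℝ) < ((p.2:ℕ):ℝ) := by exact_mod_cast hlt
    show ((p.2:ℕ):ℝ) - ((p.1:ℕ):ℝ) ≠ 0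
    linarith
  have hfin : (∏ r ∈ Finset.range L, ∏ t ∈ Finset.range r, (-1:ℝ))
      * ((∏ p ∈ (Finset.univ.filter (fun p : Fin m × Fin m => p.1 < p.2)).filter both,
          (v p.2 - v p.1))
        * ∏ p ∈ (Finset.univ.filter (fun p : Fin m × Fin m => p.1 < p.2)).filter
            (fun p => ¬ both p), (v p.2 - v p.1))
      = ((Equiv.Perm.sign ρ : ℤ) : ℝ)
        * ((∏ p ∈ (Finset.univ.filter (fun p : Fin m × Fin m => p.1 < p.2)).filter both,
          (v p.2 - v p.1))
        * ∏ p ∈ (Finset.univ.filter (fun p : Fin m × Fin m => p.1 < p.2)).filter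
            (fun p => ¬ both p), (v p.2 - v p.1)) := by
    push_cast at hperm ⊢
    linear_combination hperm
  exact (mul_right_cancel₀ (mul_ne_zero hBne hQne) hfin).symm

end CWsign



/-- Confluent determinant representation of `₀F̃₀(Λ, W)` (Lemma 3 of
Chiani–Win–Shin).  Let `λ₁ > … > λ_m` and fix distinct values `wf j ≠ w` for
the indices outside the group `{k, …, k+L-1}`.  As the `L` grouped arguments
tend to a common value `w` through tuples making all `m` arguments distinct,
`det[e^{λᵢ w_j}] / (∏_{i<j}(λᵢ−λ_j) ∏_{i<j}(wᵢ−w_j))` tends to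
`det G / (∏_{i=1}^{L-1} i! · ∏_{i<j}(λᵢ−λ_j) · ∏_{i<j, cᵢ≠c_j}(cᵢ−c_j))`,
where the columns of `G` in the group are
`λᵢ^{L-1} e^{λᵢ w}, …, λᵢ e^{λᵢ w}, e^{λᵢ w}` and the remaining columns are
`e^{λᵢ wf_j}`. -/
theorem stmt_2 (m L k : ℕ) (hm : 0 < m) (hL : 0 < L) (hkL : k + L ≤ m)
    (lam : Fin m → ℝ) (hlam : StrictAnti lam) (w : ℝ)
    (wf : Fin m → ℝ)
    (hdist : ∀ j j' : Fin m, ¬(k ≤ (j : ℕ) ∧ (j : ℕ) < k + L) →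
      ¬(k ≤ (j' : ℕ) ∧ (j' : ℕ) < k + L) → j ≠ j' → wf j ≠ wf j')
    (hne : ∀ j : Fin m, ¬(k ≤ (j : ℕ) ∧ (j : ℕ) < k + L) → wf j ≠ w) :
    Tendsto
      (fun u : Fin L → ℝ =>
        (Matrix.det (Matrix.of fun i j : Fin m =>
            Real.exp (lam i *
              (if h : k ≤ (j : ℕ) ∧ (j : ℕ) < k + L then u ⟨(j : ℕ) - k, by omega⟩
               else wf j)))) /
          ((∏ p ∈ Finset.univ.filter (fun p : Fin m × Fin m => p.1 < p.2),
              (lam p.1 - lam p.2)) *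
            ∏ p ∈ Finset.univ.filter (fun p : Fin m × Fin m => p.1 < p.2),
              ((if h : k ≤ (p.1 : ℕ) ∧ (p.1 : ℕ) < k + L then u ⟨(p.1 : ℕ) - k, by omega⟩
                else wf p.1) -
               (if h : k ≤ (p.2 : ℕ) ∧ (p.2 : ℕ) < k + L then u ⟨(p.2 : ℕ) - k, by omega⟩
                else wf p.2))))
      (𝓝[{u : Fin L → ℝ |
          Function.Injective (fun j : Fin m =>
            if h : k ≤ (j : ℕ) ∧ (j : ℕ) < k + L then u ⟨(j : ℕ) - k, by omega⟩
            else wf j)}] (fun _ => w))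
      (𝓝 ((Matrix.det (Matrix.of fun i j : Fin m =>
              if k ≤ (j : ℕ) ∧ (j : ℕ) < k + L then
                lam i ^ (k + L - 1 - (j : ℕ)) * Real.exp (lam i * w)
              else Real.exp (lam i * wf j))) /
            ((∏ i ∈ Finset.range L, (Nat.factorial i : ℝ)) *
              ((∏ p ∈ Finset.univ.filter (fun p : Fin m × Fin m => p.1 < p.2),
                  (lam p.1 - lam p.2)) *
                ∏ p ∈ Finset.univ.filter (fun p : Fin m × Fin m =>
                    p.1 < p.2 ∧
                      (if k ≤ (p.1 : ℕ) ∧ (p.1 : ℕ) < k + L then w else wf p.1) ≠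
                        (if k ≤ (p.2 : ℕ) ∧ (p.2 : ℕ) < k + L then w else wf p.2)),
                  ((if k ≤ (p.1 : ℕ) ∧ (p.1 : ℕ) < k + L then w else wf p.1) -
                    (if k ≤ (p.2 : ℕ) ∧ (p.2 : ℕ) < k + L then w else wf p.2)))))) := by
  classical
  have hxm : ∀ (u : Fin L → ℝ) (j : Fin m),
      (if h : k ≤ (j : ℕ) ∧ (j : ℕ) < k + L then u ⟨(j : ℕ) - k, by omega⟩ else wf j)
        = cwX m L k w wf u j := by
    intro u j
    rw [cwX]
    split_ifs with h
    · show u ⟨(j:ℕ) - k, by omega⟩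
        = if h' : (j:ℕ) - k < L then u ⟨(j:ℕ) - k, h'⟩ else w
      rw [dif_pos (by omega : (j:ℕ) - k < L)]
    · rfl
  -- names
  set u₀ : Fin L → ℝ := fun _ => w with hu₀
  set Pl : ℝ := ∏ p ∈ Finset.univ.filter (fun p : Fin m × Fin m => p.1 < p.2),
    (lam p.1 - lam p.2) with hPldef
  set csign : ℝ := ∏ r ∈ Finset.range L, ∏ t ∈ Finset.range r, (-1 : ℝ) with hcsigndef
  set Qx : (Fin L → ℝ) → ℝ := fun u =>
    ∏ p ∈ (Finset.univ.filter (fun p : Fin m × Fin m => p.1 < p.2)).filter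
      (fun p : Fin m × Fin m => ¬((k ≤ (p.1:ℕ) ∧ (p.1:ℕ) < k+L) ∧ (k ≤ (p.2:ℕ) ∧ (p.2:ℕ) < k+L))),
      (cwX m L k w wf u p.1 - cwX m L k w wf u p.2) with hQxdef
  set Mdet : (Fin L → ℝ) → ℝ := fun u => (cwM m L k lam w wf u).det with hMdetdef
  set Ptil : (Fin L → ℝ) → ℝ := fun u =>
    ∏ r ∈ Finset.range L, ∏ t ∈ Finset.range r, (cwUE L w u r - cwUE L w u t) with hPtildef
  -- Fact 1 : determinant factorization
  have hF1 : ∀ u : Fin L → ℝ,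
      (Matrix.of fun i j : Fin m => Real.exp (lam i * cwX m L k w wf u j)).det
        = Mdet u * Ptil u := by
    intro u
    rw [cwA_factor hkL lam w wf u, Matrix.det_mul, cwT_det hkL]
  -- Fact 2 : denominator factorization
  have hF2 : ∀ u : Fin L → ℝ,
      ∏ p ∈ Finset.univ.filter (fun p : Fin m × Fin m => p.1 < p.2),
        (cwX m L k w wf u p.1 - cwX m L k w wf u p.2)
      = (csign * Ptil u) * Qx u := by
    intro u
    rw [← Finset.prod_filter_mul_prod_filter_not
      (Finset.univ.filter (fun p : Fin m × Fin m => p.1 < p.2))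
      (fun p : Fin m × Fin m => (k ≤ (p.1:ℕ) ∧ (p.1:ℕ) < k+L) ∧ (k ≤ (p.2:ℕ) ∧ (p.2:ℕ) < k+L))
      (fun p : Fin m × Fin m => cwX m L k w wf u p.1 - cwX m L k w wf u p.2)]
    congr 1
    -- block pairs product equals csign * Ptil u
    have hb : ∀ p ∈ (Finset.univ.filter (fun p : Fin m × Fin m => p.1 < p.2)).filter
        (fun p : Fin m × Fin m =>
          (k ≤ (p.1:ℕ) ∧ (p.1:ℕ) < k+L) ∧ (k ≤ (p.2:ℕ) ∧ (p.2:ℕ) < k+L)),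
        cwX m L k w wf u p.1 - cwX m L k w wf u p.2
          = cwUE L w u ((p.1:ℕ)-k) - cwUE L w u ((p.2:ℕ)-k) := by
      intro p hp
      rw [Finset.mem_filter, Finset.mem_filter] at hp
      rw [cwX, cwX, if_pos hp.2.1, if_pos hp.2.2]
    rw [Finset.prod_congr rfl hb, Finset.filter_filter,
      cw_blockpairs hkL (fun a b => cwUE L w u a - cwUE L w u b)]
    rw [hcsigndef, hPtildef]
    rw [← Finset.prod_mul_distrib]
    apply Finset.prod_congr rfl
    intro r _
    rw [← Finset.prod_mul_distrib]
    apply Finset.prod_congr rfl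
    intro t _
    ring
  -- nonvanishing of constant products
  have hPl_ne : Pl ≠ 0 := by
    rw [hPldef]
    apply Finset.prod_ne_zero_iff.mpr
    intro p hp
    rw [Finset.mem_filter] at hp
    have := hlam hp.2
    exact sub_ne_zero_of_ne (ne_of_gt this)
  have hcs_ne : csign ≠ 0 := cw_csign_ne L
  have hcs_sq : csign * csign = 1 := cw_csign_sq L
  -- behaviour on the set S
  have hS : ∀ u : Fin L → ℝ, Function.Injective (fun j : Fin m =>
        if h : k ≤ (j : ℕ) ∧ (j : ℕ) < k + L then u ⟨(j : ℕ) - k, by omega⟩ else wf j) →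
      Function.Injective (cwX m L k w wf u) := by
    intro u hinj
    have : (fun j : Fin m =>
        if h : k ≤ (j : ℕ) ∧ (j : ℕ) < k + L then u ⟨(j : ℕ) - k, by omega⟩ else wf j)
        = cwX m L k w wf u := funext (hxm u)
    rwa [this] at hinj
  have hPtil_ne : ∀ u : Fin L → ℝ, Function.Injective (cwX m L k w wf u) → Ptil u ≠ 0 := by
    intro u hinj
    rw [hPtildef]
    apply Finset.prod_ne_zero_iff.mpr
    intro r hr
    apply Finset.prod_ne_zero_iff.mpr
    intro t ht
    have hrL := Finset.mem_range.mp hr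
    have htr := Finset.mem_range.mp ht
    have h1 : cwUE L w u r = cwX m L k w wf u ⟨k + r, by omega⟩ := by
      have hc : k ≤ ((⟨k + r, by omega⟩ : Fin m) : ℕ)
          ∧ ((⟨k + r, by omega⟩ : Fin m) : ℕ) < k + L := by
        show k ≤ k + r ∧ k + r < k + L
        omega
      rw [cwX, if_pos hc]
      show cwUE L w u r = cwUE L w u (((⟨k + r, by omega⟩ : Fin m) : ℕ) - k)
      congr 1
      show r = k + r - k
      omega
    have h2 : cwUE L w u t = cwX m L k w wf u ⟨k + t, by omega⟩ := by
      have hc : k ≤ ((⟨k + t, by omega⟩ : Fin m) : ℕ)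
          ∧ ((⟨k + t, by omega⟩ : Fin m) : ℕ) < k + L := by
        show k ≤ k + t ∧ k + t < k + L
        omega
      rw [cwX, if_pos hc]
      show cwUE L w u t = cwUE L w u (((⟨k + t, by omega⟩ : Fin m) : ℕ) - k)
      congr 1
      show t = k + t - k
      omega
    rw [h1, h2]
    apply sub_ne_zero_of_ne
    intro hc
    have := hinj hc
    rw [Fin.mk.injEq] at this
    omega
  have hQx_ne : ∀ u : Fin L → ℝ, Function.Injective (cwX m L k w wf u) → Qx u ≠ 0 := by
    intro u hinj
    rw [hQxdef]
    apply Finset.prod_ne_zero_iff.mpr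
    intro p hp
    rw [Finset.mem_filter, Finset.mem_filter] at hp
    apply sub_ne_zero_of_ne
    intro hc
    exact absurd (hinj hc) (Fin.ne_of_lt hp.1.2)
  -- continuity of the limit representative
  -- continuity of individual coordinates
  have hXcont : ∀ j : Fin m, Continuous (fun u : Fin L → ℝ => cwX m L k w wf u j) := by
    intro j
    by_cases hb : k ≤ (j:ℕ) ∧ (j:ℕ) < k + L
    · have he : (fun u : Fin L → ℝ => cwX m L k w wf u j)
          = fun u => u ⟨(j:ℕ) - k, by omega⟩ := by
        funext u
        rw [cwX, if_pos hb]
        show (if h' : (j:ℕ) - k < L then u ⟨(j:ℕ)-k, h'⟩ else w) = _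
        rw [dif_pos (by omega : (j:ℕ) - k < L)]
      rw [he]
      exact continuous_apply _
    · have he : (fun u : Fin L → ℝ => cwX m L k w wf u j) = fun _ => wf j := by
        funext u
        rw [cwX, if_neg hb]
      rw [he]
      exact continuous_const
  have hX0 : ∀ j : Fin m, cwX m L k w wf u₀ j
      = if k ≤ (j:ℕ) ∧ (j:ℕ) < k + L then w else wf j := by
    intro j
    rw [cwX]
    split_ifs with h
    · rw [hu₀]
      exact congrFun (cwUE_const L w) _
    · rfl
  have hEnt : ∀ (s : ℕ), s < L → ∀ lami : ℝ, ContinuousAt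
      (fun u : Fin L → ℝ => cwF s lami (fun t => cwUE L w u (s - t))) u₀ := by
    intro s hsL lami
    have hψc : Continuous (fun u : Fin L → ℝ => (fun t : ℕ => cwUE L w u (s - t))) := by
      apply continuous_pi
      intro t
      by_cases h : s - t < L
      · have he : (fun u : Fin L → ℝ => cwUE L w u (s - t)) = fun u => u ⟨s - t, h⟩ := by
          funext u
          show (if h' : s - t < L then u ⟨s-t, h'⟩ else w) = _
          rw [dif_pos h]
        rw [he]
        exact continuous_apply _
      · have he : (fun u : Fin L → ℝ => cwUE L w u (s - t)) = fun _ => w := by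
          funext u
          show (if h' : s - t < L then u ⟨s-t,h'⟩ else w) = _
          rw [dif_neg h]
        rw [he]
        exact continuous_const
    have hψ0 : (fun t : ℕ => cwUE L w u₀ (s - t)) = fun _ : ℕ => w := by
      funext t
      rw [hu₀]
      exact congrFun (cwUE_const L w) _
    have hmem : {v : ℕ → ℝ | ∀ i < s+1, |v i| ≤ |w| + 1} ∈ 𝓝 (fun _ : ℕ => w) := by
      have hsub : {v : ℕ → ℝ | ∀ i ∈ Finset.range (s+1), |v i| < |w| + 1}
          ⊆ {v : ℕ → ℝ | ∀ i < s+1, |v i| ≤ |w| + 1} := by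
        intro v hv i hi
        exact le_of_lt (hv i (Finset.mem_range.mpr hi))
      apply Filter.mem_of_superset _ hsub
      have hopen : IsOpen {v : ℕ → ℝ | ∀ i ∈ Finset.range (s+1), |v i| < |w| + 1} := by
        have hiff : {v : ℕ → ℝ | ∀ i ∈ Finset.range (s+1), |v i| < |w| + 1}
            = ⋂ i ∈ (Finset.range (s+1) : Finset ℕ), {v : ℕ → ℝ | |v i| < |w| + 1} := by
          ext v
          simp
        rw [hiff]
        apply isOpen_biInter_finset
        intro i _
        exact isOpen_lt (continuous_abs.comp (continuous_apply i)) continuous_const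
      apply hopen.mem_nhds
      intro i _
      show |w| < |w| + 1
      linarith
    have hFcont : ContinuousAt (cwF s lami) (fun _ : ℕ => w) :=
      (cwF_continuousOn s lami (|w| + 1) (by positivity)).continuousAt hmem
    have hc2 : ContinuousAt (cwF s lami) (fun t : ℕ => cwUE L w u₀ (s - t)) := by
      rw [hψ0]
      exact hFcont
    exact hc2.comp hψc.continuousAt
  have hMcont : ContinuousAt Mdet u₀ := by
    rw [hMdetdef]
    have hmat : ContinuousAt (fun u : Fin L → ℝ => cwM m L k lam w wf u) u₀ := by
      apply continuousAt_pi.mpr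
      intro i
      apply continuousAt_pi.mpr
      intro j
      show ContinuousAt (fun u : Fin L → ℝ =>
        if k ≤ (j:ℕ) ∧ (j:ℕ) < k + L then
          cwF ((j:ℕ)-k) (lam i) (fun t => cwUE L w u ((j:ℕ)-k-t))
        else Real.exp (lam i * wf j)) u₀
      by_cases hb : k ≤ (j:ℕ) ∧ (j:ℕ) < k + L
      · simp only [if_pos hb]
        exact hEnt ((j:ℕ)-k) (by omega) (lam i)
      · simp only [if_neg hb]
        exact continuousAt_const
    exact cw_det_continuous.continuousAt.comp hmat
  have hQcont : Continuous Qx := by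
    rw [hQxdef]
    apply continuous_finset_prod
    intro p _
    exact (hXcont p.1).sub (hXcont p.2)
  have hQx0_ne : Qx u₀ ≠ 0 := by
    rw [hQxdef]
    apply Finset.prod_ne_zero_iff.mpr
    intro p hp
    rw [Finset.mem_filter, Finset.mem_filter] at hp
    obtain ⟨⟨-, hlt⟩, hnb⟩ := hp
    rw [hX0 p.1, hX0 p.2]
    apply sub_ne_zero_of_ne
    by_cases h1 : k ≤ (p.1:ℕ) ∧ (p.1:ℕ) < k + L
    · have h2 : ¬(k ≤ (p.2:ℕ) ∧ (p.2:ℕ) < k + L) := fun h2 => hnb ⟨h1, h2⟩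
      rw [if_pos h1, if_neg h2]
      exact (hne p.2 h2).symm
    · rw [if_neg h1]
      by_cases h2 : k ≤ (p.2:ℕ) ∧ (p.2:ℕ) < k + L
      · rw [if_pos h2]
        exact hne p.1 h1
      · rw [if_neg h2]
        exact hdist p.1 p.2 h1 h2 (Fin.ne_of_lt hlt)
  have hcont : ContinuousAt (fun u => Mdet u / (csign * (Pl * Qx u))) u₀ := by
    apply ContinuousAt.div hMcont
    · exact continuousAt_const.mul (continuousAt_const.mul hQcont.continuousAt)
    · exact mul_ne_zero hcs_ne (mul_ne_zero hPl_ne hQx0_ne)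
  -- value at u₀ equals the stated limit
  have hvalue : (Matrix.det (Matrix.of fun i j : Fin m =>
              if k ≤ (j : ℕ) ∧ (j : ℕ) < k + L then
                lam i ^ (k + L - 1 - (j : ℕ)) * Real.exp (lam i * w)
              else Real.exp (lam i * wf j))) /
            ((∏ i ∈ Finset.range L, (Nat.factorial i : ℝ)) *
              ((∏ p ∈ Finset.univ.filter (fun p : Fin m × Fin m => p.1 < p.2),
                  (lam p.1 - lam p.2)) *
                ∏ p ∈ Finset.univ.filter (fun p : Fin m × Fin m =>
                    p.1 < p.2 ∧
                      (if k ≤ (p.1 : ℕ) ∧ (p.1 : ℕ) < k + L then w else wf p.1) ≠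
                        (if k ≤ (p.2 : ℕ) ∧ (p.2 : ℕ) < k + L then w else wf p.2)),
                  ((if k ≤ (p.1 : ℕ) ∧ (p.1 : ℕ) < k + L then w else wf p.1) -
                    (if k ≤ (p.2 : ℕ) ∧ (p.2 : ℕ) < k + L then w else wf p.2))))
      = Mdet u₀ / (csign * (Pl * Qx u₀)) := by
    set G : Matrix (Fin m) (Fin m) ℝ := Matrix.of fun i j : Fin m =>
      if k ≤ (j : ℕ) ∧ (j : ℕ) < k + L then
        lam i ^ (k + L - 1 - (j : ℕ)) * Real.exp (lam i * w)
      else Real.exp (lam i * wf j) with hGdef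
    set Fac : ℝ := ∏ i ∈ Finset.range L, (Nat.factorial i : ℝ) with hFacdef
    set d : Fin m → ℝ := fun j =>
      if k ≤ (j:ℕ) ∧ (j:ℕ) < k + L then ((Nat.factorial ((j:ℕ)-k)) : ℝ) else 1 with hddef
    have hFac_ne : Fac ≠ 0 := by
      rw [hFacdef]
      apply Finset.prod_ne_zero_iff.mpr
      intro i _
      exact_mod_cast (Nat.factorial_pos i).ne'
    -- column-permuted G equals M₀ times a diagonal
    have hGsub : G.submatrix id (cwRho m L k hkL) = cwM m L k lam w wf u₀ * Matrix.diagonal d := by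
      ext i j
      simp only [Matrix.submatrix_apply, Matrix.mul_diagonal, hGdef, hddef, Matrix.of_apply,
        id_eq, cwM]
      by_cases hb : k ≤ (j:ℕ) ∧ (j:ℕ) < k + L
      · have hρv := cwRho_block hkL j hb
        have hρb := (cwRho_mem_block_iff hkL j).mpr hb
        simp only [if_pos hb, if_pos hρb]
        have hcw : (fun t : ℕ => cwUE L w u₀ ((j:ℕ)-k-t)) = fun _ : ℕ => w := by
          funext t
          rw [hu₀]
          exact congrFun (cwUE_const L w) _
        rw [hρv, hcw, cwF_const]
        have he : k + L - 1 - (k + (L - 1 - ((j:ℕ)-k))) = (j:ℕ) - k := by omega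
        rw [he]
        have hfne : ((Nat.factorial ((j:ℕ)-k)) : ℝ) ≠ 0 := by
          exact_mod_cast (Nat.factorial_pos _).ne'
        field_simp
      · have hρj := cwRho_nonblock hkL j hb
        rw [hρj]
        simp only [if_neg hb, mul_one]
    have hsign : ((Equiv.Perm.sign (cwRho m L k hkL) : ℤ) : ℝ) = csign := by
      rw [hcsigndef]
      exact cwRho_sign hkL
    have hdprod : ∏ j : Fin m, d j = Fac := by
      rw [← Finset.prod_filter_mul_prod_filter_not Finset.univ
        (fun j : Fin m => k ≤ (j:ℕ) ∧ (j:ℕ) < k + L) d]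
      have h2 : ∏ j ∈ Finset.univ.filter (fun j : Fin m => ¬(k ≤ (j:ℕ) ∧ (j:ℕ) < k + L)),
          d j = 1 := by
        apply Finset.prod_eq_one
        intro j hj
        rw [Finset.mem_filter] at hj
        rw [hddef]
        exact if_neg hj.2
      have h1 : ∏ j ∈ Finset.univ.filter (fun j : Fin m => k ≤ (j:ℕ) ∧ (j:ℕ) < k + L),
          d j = Fac := by
        have hcongr : ∀ j ∈ Finset.univ.filter (fun j : Fin m => k ≤ (j:ℕ) ∧ (j:ℕ) < k + L),
            d j = ((Nat.factorial ((j:ℕ)-k)) : ℝ) := by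
          intro j hj
          rw [Finset.mem_filter] at hj
          rw [hddef]
          exact if_pos hj.2
        rw [Finset.prod_congr rfl hcongr, cw_block_reindex hL hkL
          (fun r => ((Nat.factorial r : ℝ))), hFacdef]
      rw [h1, h2, mul_one]
    have hps := Matrix.det_permute' (cwRho m L k hkL) G
    rw [hGsub, Matrix.det_mul, Matrix.det_diagonal, hdprod] at hps
    -- hps : Mdet u₀ * Fac = sign * det G
    have hGdet : G.det = csign * (Mdet u₀ * Fac) := by
      have hps' : Mdet u₀ * Fac = ((Equiv.Perm.sign (cwRho m L k hkL) : ℤ) : ℝ) * G.det := hps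
      rw [hsign] at hps'
      rw [hps', ← mul_assoc, hcs_sq, one_mul]
    -- the primed product equals Qx u₀
    have hQ' : ∏ p ∈ Finset.univ.filter (fun p : Fin m × Fin m =>
          p.1 < p.2 ∧
            (if k ≤ (p.1 : ℕ) ∧ (p.1 : ℕ) < k + L then w else wf p.1) ≠
              (if k ≤ (p.2 : ℕ) ∧ (p.2 : ℕ) < k + L then w else wf p.2)),
        ((if k ≤ (p.1 : ℕ) ∧ (p.1 : ℕ) < k + L then w else wf p.1) -
          (if k ≤ (p.2 : ℕ) ∧ (p.2 : ℕ) < k + L then w else wf p.2)) = Qx u₀ := by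
      rw [hQxdef]
      rw [Finset.filter_filter]
      have hsets : Finset.univ.filter (fun p : Fin m × Fin m =>
          p.1 < p.2 ∧
            (if k ≤ (p.1 : ℕ) ∧ (p.1 : ℕ) < k + L then w else wf p.1) ≠
              (if k ≤ (p.2 : ℕ) ∧ (p.2 : ℕ) < k + L then w else wf p.2))
          = Finset.univ.filter (fun p : Fin m × Fin m => p.1 < p.2 ∧
            ¬((k ≤ (p.1:ℕ) ∧ (p.1:ℕ) < k+L) ∧ (k ≤ (p.2:ℕ) ∧ (p.2:ℕ) < k+L))) := by
        apply Finset.filter_congr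
        intro p _
        constructor
        · rintro ⟨hlt, hne'⟩
          refine ⟨hlt, ?_⟩
          rintro ⟨h1, h2⟩
          rw [if_pos h1, if_pos h2] at hne'
          exact hne' rfl
        · rintro ⟨hlt, hnb⟩
          refine ⟨hlt, ?_⟩
          by_cases h1 : k ≤ (p.1:ℕ) ∧ (p.1:ℕ) < k + L
          · have h2 : ¬(k ≤ (p.2:ℕ) ∧ (p.2:ℕ) < k + L) := fun h2 => hnb ⟨h1, h2⟩
            rw [if_pos h1, if_neg h2]
            exact (hne p.2 h2).symm
          · rw [if_neg h1]
            by_cases h2 : k ≤ (p.2:ℕ) ∧ (p.2:ℕ) < k + L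
            · rw [if_pos h2]
              exact hne p.1 h1
            · rw [if_neg h2]
              exact hdist p.1 p.2 h1 h2 (Fin.ne_of_lt hlt)
      rw [hsets]
      apply Finset.prod_congr rfl
      intro p _
      rw [hX0 p.1, hX0 p.2]
    rw [hQ', hGdet]
    rw [div_eq_div_iff (mul_ne_zero hFac_ne (mul_ne_zero hPl_ne hQx0_ne))
      (mul_ne_zero hcs_ne (mul_ne_zero hPl_ne hQx0_ne))]
    linear_combination (Mdet u₀ * Fac * Pl * Qx u₀) * hcs_sq
  -- assemble
  rw [hvalue]
  refine Filter.Tendsto.congr'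
    (f₁ := fun u => Mdet u / (csign * (Pl * Qx u))) ?_ ?_
  · apply eventually_nhdsWithin_of_forall
    intro u hu
    beta_reduce
    have hinj := hS u hu
    have hP := hPtil_ne u hinj
    have hQ := hQx_ne u hinj
    -- rewrite numerator and denominator
    have hnum : (Matrix.of fun i j : Fin m =>
        Real.exp (lam i *
          (if h : k ≤ (j : ℕ) ∧ (j : ℕ) < k + L then u ⟨(j : ℕ) - k, by omega⟩
           else wf j))).det = Mdet u * Ptil u := by
      rw [← hF1 u]
      congr 1
      ext i j
      rw [Matrix.of_apply, Matrix.of_apply, hxm u j]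
    have hden : ∏ p ∈ Finset.univ.filter (fun p : Fin m × Fin m => p.1 < p.2),
        ((if h : k ≤ (p.1 : ℕ) ∧ (p.1 : ℕ) < k + L then u ⟨(p.1 : ℕ) - k, by omega⟩
          else wf p.1) -
         (if h : k ≤ (p.2 : ℕ) ∧ (p.2 : ℕ) < k + L then u ⟨(p.2 : ℕ) - k, by omega⟩
          else wf p.2)) = (csign * Ptil u) * Qx u := by
      rw [← hF2 u]
      apply Finset.prod_congr rfl
      intro p _
      rw [hxm u p.1, hxm u p.2]
    rw [hnum, hden]
    rw [div_eq_div_iff (mul_ne_zero hcs_ne (mul_ne_zero hPl_ne hQ))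
      (mul_ne_zero hPl_ne (mul_ne_zero (mul_ne_zero hcs_ne hP) hQ))]
    ring
  · exact (hcont.tendsto).mono_left nhdsWithin_le_nhds
end CWaux2
end

section
/- For every nonnegative integer m and real μ > 0, ∫_0^∞ x^m e^{−μx} ln(1+x) dx = m! · e^{μ} · Σ_{i=0}^{m} Γ(i−m, μ) / μ^{i+1}, where Γ(a, μ) = ∫_μ^∞ t^{a−1} e^{−t} dt is the upper incomplete Gamma function. -/
open MeasureTheory Real Finset

/-- The upper incomplete Gamma function `Γ(a, μ) = ∫_μ^∞ t^{a−1} e^{−t} dt`,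
defined for real `a` and `μ > 0` by the convergent integral. -/
noncomputable def upperIncompleteGamma (a μ : ℝ) : ℝ :=
  ∫ t in Set.Ioi μ, t ^ (a - 1) * Real.exp (-t)

open Filter Set Asymptotics

lemma bigO_exp {f : ℝ → ℝ} {b : ℝ}
    (h : Tendsto (fun x => f x * exp (b / 2 * x)) atTop (nhds 0)) :
    f =O[atTop] fun x => exp (-(b / 2) * x) := by
  have h1 : (fun x => f x * exp (b / 2 * x)) =O[atTop] (fun _ : ℝ => (1:ℝ)) :=
    h.isBigO_one ℝ
  have h2 := h1.mul (isBigO_refl (fun x : ℝ => exp (-(b / 2) * x)) atTop)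
  refine h2.congr (fun x => ?_) (fun x => one_mul _)
  rw [mul_assoc, ← Real.exp_add]
  ring_nf
  simp

lemma tendsto_pow_exp (k : ℕ) {b : ℝ} (hb : 0 < b) :
    Tendsto (fun x : ℝ => x ^ k * exp (-b * x)) atTop (nhds 0) := by
  have := tendsto_rpow_mul_exp_neg_mul_atTop_nhds_zero (k : ℝ) b hb
  simpa [Real.rpow_natCast] using this

lemma bigO_pow_exp (k : ℕ) {b : ℝ} (hb : 0 < b) :
    (fun x : ℝ => x ^ k * exp (-b * x)) =O[atTop] fun x => exp (-(b / 2) * x) := by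
  apply bigO_exp
  have := tendsto_pow_exp k (half_pos hb)
  refine this.congr' ?_
  filter_upwards with x
  rw [mul_assoc, ← Real.exp_add]
  ring_nf

lemma cont_pow_exp {μ : ℝ} (k : ℕ) : Continuous (fun x : ℝ => x ^ k * exp (-μ * x)) := by
  fun_prop

lemma integrableOn_pow_exp {μ : ℝ} (hμ : 0 < μ) (k : ℕ) :
    IntegrableOn (fun x : ℝ => x ^ k * exp (-μ * x)) (Set.Ioi 0) := by
  apply integrable_of_isBigO_exp_neg (half_pos hμ)
  · exact (cont_pow_exp k).continuousOn
  · exact bigO_pow_exp k hμ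

lemma integrableOn_pow_exp_inv {μ : ℝ} (hμ : 0 < μ) (k : ℕ) :
    IntegrableOn (fun x : ℝ => x ^ k * exp (-μ * x) / (1 + x)) (Set.Ioi 0) := by
  apply integrable_of_isBigO_exp_neg (half_pos hμ)
  · apply ContinuousOn.div (cont_pow_exp k).continuousOn
      (continuous_const.add continuous_id').continuousOn
    intro x hx
    have hx0 : (0:ℝ) ≤ x := hx
    exact ne_of_gt (by show (0:ℝ) < 1 + x; linarith)
  · refine IsBigO.trans ?_ (bigO_pow_exp k hμ)
    rw [isBigO_iff]
    refine ⟨1, ?_⟩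
    filter_upwards [eventually_ge_atTop (0:ℝ)] with x hx
    simp only [Real.norm_eq_abs, one_mul, abs_div]
    rw [abs_of_nonneg (by linarith : (0:ℝ) ≤ 1 + x)]
    apply div_le_of_le_mul₀ (by linarith) (abs_nonneg _)
    nlinarith [abs_nonneg (x ^ k * exp (-μ * x))]

lemma integrableOn_pow_exp_log {μ : ℝ} (hμ : 0 < μ) (k : ℕ) :
    IntegrableOn (fun x : ℝ => x ^ k * exp (-μ * x) * Real.log (1 + x)) (Set.Ioi 0) := by
  apply integrable_of_isBigO_exp_neg (half_pos hμ)
  · apply ContinuousOn.mul (cont_pow_exp k).continuousOn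
    refine ContinuousOn.log (continuous_const.add continuous_id').continuousOn ?_
    intro x hx
    have hx0 : (0:ℝ) ≤ x := hx
    exact ne_of_gt (by linarith)
  · refine IsBigO.trans ?_ (bigO_pow_exp (k+1) hμ)
    rw [isBigO_iff]
    refine ⟨1, ?_⟩
    filter_upwards [eventually_ge_atTop (0:ℝ)] with x hx
    simp only [Real.norm_eq_abs, one_mul, abs_mul]
    have hlog : |Real.log (1 + x)| ≤ x := by
      rw [abs_of_nonneg (Real.log_nonneg (by linarith))]
      calc Real.log (1 + x) ≤ (1 + x) - 1 := Real.log_le_sub_one_of_pos (by linarith)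
      _ = x := by ring
    have h1 : |x ^ k| * |exp (-μ * x)| * |Real.log (1+x)| ≤ |x ^ k| * |exp (-μ*x)| * x :=
      mul_le_mul_of_nonneg_left hlog (by positivity)
    refine h1.trans (le_of_eq ?_)
    rw [pow_succ, abs_mul, abs_of_nonneg hx]
    ring

lemma integral_pow_exp {μ : ℝ} (hμ : 0 < μ) (k : ℕ) :
    ∫ x in Set.Ioi (0:ℝ), x ^ k * exp (-μ * x) = (Nat.factorial k : ℝ) / μ ^ (k + 1) := by
  have h := Real.integral_rpow_mul_exp_neg_mul_Ioi (a := (k:ℝ) + 1) (r := μ)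
    (by positivity) hμ
  rw [show ((k:ℝ) + 1 - 1) = (k:ℝ) by ring] at h
  have h2 : ∫ t in Set.Ioi (0:ℝ), t ^ (k:ℝ) * exp (-(μ * t))
      = ∫ x in Set.Ioi (0:ℝ), x ^ k * exp (-μ * x) := by
    refine setIntegral_congr_fun measurableSet_Ioi (fun x _ => ?_)
    rw [Real.rpow_natCast, neg_mul]
  rw [h2] at h
  rw [h, Real.Gamma_nat_eq_factorial,
    show ((k:ℝ) + 1) = ((k+1 : ℕ):ℝ) by push_cast; ring, Real.rpow_natCast]
  rw [one_div, inv_pow]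
  ring

lemma integrableOn_rpow_exp {μ : ℝ} (hμ : 0 < μ) (c : ℝ) :
    IntegrableOn (fun t : ℝ => t ^ c * exp (-t)) (Set.Ioi μ) := by
  apply integrable_of_isBigO_exp_neg (half_pos one_pos)
  · apply ContinuousOn.mul _ (continuous_exp.comp continuous_neg).continuousOn
    intro t ht
    exact (Real.continuousAt_rpow_const t c (Or.inl (ne_of_gt (lt_of_lt_of_le hμ ht)))).continuousWithinAt
  · apply bigO_exp
    have := tendsto_rpow_mul_exp_neg_mul_atTop_nhds_zero c (1/2) (by norm_num)
    refine this.congr' ?_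
    filter_upwards with x
    rw [mul_assoc, ← Real.exp_add]
    norm_num
    left; ring

lemma uig_rec {μ : ℝ} (hμ : 0 < μ) (a : ℝ) :
    upperIncompleteGamma (a + 1) μ
      = a * upperIncompleteGamma a μ + μ ^ a * exp (-μ) := by
  have hderiv : ∀ t ∈ Set.Ioi μ,
      HasDerivAt (fun t : ℝ => t ^ a * exp (-t))
        (a * t ^ (a - 1) * exp (-t) - t ^ a * exp (-t)) t := by
    intro t ht
    have h1 : HasDerivAt (fun t : ℝ => t ^ a) (a * t ^ (a - 1)) t :=
      Real.hasDerivAt_rpow_const (Or.inl (ne_of_gt (hμ.trans ht)))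
    have h2 : HasDerivAt (fun t : ℝ => exp (-t)) (-exp (-t)) t := by
      simpa using ((hasDerivAt_id t).neg).exp
    have := h1.mul h2
    refine this.congr_deriv ?_
    ring
  have hint : IntegrableOn
      (fun t : ℝ => a * t ^ (a - 1) * exp (-t) - t ^ a * exp (-t)) (Set.Ioi μ) := by
    have i1 := (integrableOn_rpow_exp hμ (a - 1)).const_mul a
    have i2 := integrableOn_rpow_exp hμ a
    simpa [mul_assoc, Pi.sub_def, IntegrableOn] using i1.sub i2
  have htend : Tendsto (fun t : ℝ => t ^ a * exp (-t)) atTop (nhds 0) := by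
    have := tendsto_rpow_mul_exp_neg_mul_atTop_nhds_zero a 1 one_pos
    simpa using this
  have hFTC := integral_Ioi_of_hasDerivAt_of_tendsto
    (f := fun t : ℝ => t ^ a * exp (-t)) (a := μ)
    (by
      apply ContinuousWithinAt.mul _ ((continuous_exp.comp continuous_neg).continuousWithinAt)
      exact (Real.continuousAt_rpow_const μ a (Or.inl (ne_of_gt hμ))).continuousWithinAt)
    hderiv hint htend
  have hsplit : ∫ t in Set.Ioi μ, (a * t ^ (a - 1) * exp (-t) - t ^ a * exp (-t))
      = a * upperIncompleteGamma a μ - upperIncompleteGamma (a + 1) μ := by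
    rw [setIntegral_congr_fun (g := fun t : ℝ => a * (t ^ (a - 1) * exp (-t)) - t ^ a * exp (-t))
        measurableSet_Ioi (fun t _ => by ring)]
    rw [integral_sub ((integrableOn_rpow_exp hμ (a-1)).const_mul a) (integrableOn_rpow_exp hμ a),
        integral_const_mul]
    unfold upperIncompleteGamma
    congr 1
    exact setIntegral_congr_fun measurableSet_Ioi (fun t _ => by rw [add_sub_cancel_right])
  rw [hsplit, zero_sub] at hFTC
  have hb : (fun t : ℝ => t ^ a * exp (-t)) μ = μ ^ a * exp (-μ) := rfl
  linarith

-- J base case substitution, assuming the uIG integral form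
lemma uig_zero_aux {μ : ℝ} (hμ : 0 < μ) :
    ∫ t in Set.Ioi μ, t ^ ((0:ℝ) - 1) * exp (-t)
      = exp (-μ) * ∫ x in Set.Ioi (0:ℝ), exp (-μ * x) / (1 + x) := by
  -- step 1: translate
  have htrans : ∫ t in Set.Ioi μ, t ^ ((0:ℝ) - 1) * exp (-t)
      = ∫ x in Set.Ioi (0:ℝ), (x + μ) ^ ((0:ℝ) - 1) * exp (-(x + μ)) := by
    have h1 : MeasurePreserving (fun x : ℝ => x + μ) volume volume :=
      measurePreserving_add_right volume μ
    have h2 : MeasurableEmbedding (fun x : ℝ => x + μ) :=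
      (MeasurableEquiv.addRight μ).measurableEmbedding
    have := h1.setIntegral_preimage_emb h2
      (fun t => t ^ ((0:ℝ) - 1) * exp (-t)) (Set.Ioi μ)
    simpa using this.symm
  -- step 2: scale x = μ * y
  have hscale : ∫ x in Set.Ioi (0:ℝ), (x + μ) ^ ((0:ℝ) - 1) * exp (-(x + μ))
      = μ * ∫ y in Set.Ioi (0:ℝ), (μ * y + μ) ^ ((0:ℝ) - 1) * exp (-(μ * y + μ)) := by
    have := integral_comp_mul_left_Ioi
      (fun x => (x + μ) ^ ((0:ℝ) - 1) * exp (-(x + μ))) 0 hμ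
    rw [mul_zero] at this
    rw [this, smul_eq_mul, ← mul_assoc, mul_inv_cancel₀ (ne_of_gt hμ), one_mul]
  have hcongr : ∫ y in Set.Ioi (0:ℝ), (μ * y + μ) ^ ((0:ℝ) - 1) * exp (-(μ * y + μ))
      = ∫ y in Set.Ioi (0:ℝ), (exp (-μ) / μ) * (exp (-μ * y) / (1 + y)) := by
    refine setIntegral_congr_fun measurableSet_Ioi (fun y hy => ?_)
    have hy0 : (0:ℝ) < y := hy
    have h1y : (0:ℝ) < 1 + y := by linarith
    rw [show ((0:ℝ) - 1) = -1 by ring, Real.rpow_neg_one]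
    rw [show μ * y + μ = μ * (1 + y) by ring, mul_inv]
    rw [show -(μ * (1 + y)) = -μ + -(μ * y) by ring, Real.exp_add]
    field_simp
  rw [htrans, hscale, hcongr, integral_const_mul, ← mul_assoc,
    show μ * (exp (-μ) / μ) = exp (-μ) by field_simp]

lemma J_eq {μ : ℝ} (hμ : 0 < μ) (k : ℕ) :
    ∫ x in Set.Ioi (0:ℝ), x ^ k * exp (-μ * x) / (1 + x)
      = (Nat.factorial k : ℝ) * exp μ * upperIncompleteGamma (-(k:ℝ)) μ := by
  induction k with
  | zero =>
    have h0 : upperIncompleteGamma (-(0:ℕ):ℝ) μ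
        = exp (-μ) * ∫ x in Set.Ioi (0:ℝ), exp (-μ * x) / (1 + x) := by
      unfold upperIncompleteGamma
      rw [show (-(0:ℕ):ℝ) - 1 = (0:ℝ) - 1 by norm_num]
      exact uig_zero_aux hμ
    rw [h0]
    simp only [pow_zero, one_mul, Nat.factorial_zero, Nat.cast_one]
    rw [← mul_assoc, mul_comm (exp μ) (exp (-μ)), ← Real.exp_add]
    simp
  | succ k ih =>
    have hsplit : ∫ x in Set.Ioi (0:ℝ), x ^ (k+1) * exp (-μ * x) / (1 + x)
        = ∫ x in Set.Ioi (0:ℝ),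
            (x ^ k * exp (-μ * x) - x ^ k * exp (-μ * x) / (1 + x)) := by
      refine setIntegral_congr_fun measurableSet_Ioi (fun x hx => ?_)
      have hx0 : (0:ℝ) < x := hx
      have h1x : (1:ℝ) + x ≠ 0 := by positivity
      field_simp
      ring
    rw [hsplit, integral_sub (integrableOn_pow_exp hμ k) (integrableOn_pow_exp_inv hμ k),
      integral_pow_exp hμ k, ih]
    have hrec := uig_rec hμ (-(k:ℝ) - 1)
    rw [show -(k:ℝ) - 1 + 1 = -(k:ℝ) by ring] at hrec
    have hcast : -(k:ℝ) - 1 = -((k+1:ℕ):ℝ) := by push_cast; ring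
    rw [hcast] at hrec
    have hpow : μ ^ (-((k+1:ℕ):ℝ)) = (μ ^ (k+1))⁻¹ := by
      rw [Real.rpow_neg hμ.le, Real.rpow_natCast]
    rw [hpow] at hrec
    have hfac : ((k+1).factorial : ℝ) = (k+1) * k.factorial := by
      rw [Nat.factorial_succ]; push_cast; ring
    rw [hfac, hrec]
    have hee : exp μ * exp (-μ) = 1 := by rw [← Real.exp_add]; simp
    have hμp : (0:ℝ) < μ ^ (k+1) := by positivity
    field_simp
    push_cast at *
    linear_combination -hee

lemma ibp {μ : ℝ} (hμ : 0 < μ) (m : ℕ) :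
    ∫ x in Set.Ioi (0:ℝ), x ^ m * exp (-μ * x) * Real.log (1 + x)
      = ((m:ℝ) / μ) * (∫ x in Set.Ioi (0:ℝ), x ^ (m-1) * exp (-μ * x) * Real.log (1 + x))
        + (1 / μ) * (∫ x in Set.Ioi (0:ℝ), x ^ m * exp (-μ * x) / (1 + x)) := by
  have hintA := integrableOn_pow_exp_log hμ m
  have hintB := integrableOn_pow_exp_log hμ (m-1)
  have hintC := integrableOn_pow_exp_inv hμ m
  have htend := tendsto_pow_exp (m+1) hμ
  set F : ℝ → ℝ := fun x => -(1/μ) * (x ^ m * exp (-μ * x) * Real.log (1 + x)) with hF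
  set f' : ℝ → ℝ := fun x =>
    x ^ m * exp (-μ * x) * Real.log (1 + x)
      - ((m:ℝ)/μ) * (x ^ (m-1) * exp (-μ * x) * Real.log (1 + x))
      - (1/μ) * (x ^ m * exp (-μ * x) / (1 + x)) with hf'
  have hderiv : ∀ x ∈ Set.Ioi (0:ℝ), HasDerivAt F (f' x) x := by
    intro x hx
    have hx0 : (0:ℝ) < x := hx
    have h1x : (1:ℝ) + x ≠ 0 := by positivity
    have hp : HasDerivAt (fun x : ℝ => x ^ m) ((m:ℝ) * x ^ (m-1)) x := hasDerivAt_pow m x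
    have he : HasDerivAt (fun x : ℝ => exp (-μ * x)) (exp (-μ * x) * (-μ)) x := by
      simpa using (((hasDerivAt_id x).const_mul (-μ)).exp)
    have hl : HasDerivAt (fun x : ℝ => Real.log (1 + x)) (1 / (1 + x)) x := by
      simpa using (((hasDerivAt_id x).const_add 1).log h1x)
    have h := ((hp.mul he).mul hl).const_mul (-(1/μ))
    refine h.congr_deriv ?_
    rw [hf']
    simp only [Pi.mul_apply]
    field_simp
    ring
  have hcont : ContinuousWithinAt F (Set.Ici 0) 0 := by
    apply ContinuousAt.continuousWithinAt
    have hlog : ContinuousAt (fun x : ℝ => Real.log (1 + x)) 0 := by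
      have := (Real.continuousAt_log (x := (1:ℝ) + 0) (by norm_num))
      exact this.comp (by fun_prop)
    fun_prop
  have hf'int : IntegrableOn f' (Set.Ioi 0) := by
    exact (hintA.sub (hintB.const_mul _)).sub (hintC.const_mul _)
  have hFtend : Tendsto F atTop (nhds 0) := by
    have h1 : Tendsto (fun x : ℝ => x ^ m * exp (-μ * x) * Real.log (1 + x)) atTop (nhds 0) := by
      apply squeeze_zero' (g := fun x : ℝ => x ^ (m+1) * exp (-μ * x))
      · filter_upwards [eventually_ge_atTop (0:ℝ)] with x hx
        have : (0:ℝ) ≤ Real.log (1 + x) := Real.log_nonneg (by linarith)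
        positivity
      · filter_upwards [eventually_ge_atTop (0:ℝ)] with x hx
        have hlog : Real.log (1 + x) ≤ x := by
          calc Real.log (1 + x) ≤ (1 + x) - 1 := Real.log_le_sub_one_of_pos (by linarith)
          _ = x := by ring
        calc x ^ m * exp (-μ * x) * Real.log (1 + x) ≤ x ^ m * exp (-μ * x) * x := by
              exact mul_le_mul_of_nonneg_left hlog (by positivity)
          _ = x ^ (m+1) * exp (-μ * x) := by ring
      · exact htend
    have h2 := h1.const_mul (-(1/μ))
    rw [show (-(1/μ):ℝ) * 0 = 0 from by ring] at h2
    exact h2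
  have hFTC := integral_Ioi_of_hasDerivAt_of_tendsto hcont hderiv hf'int hFtend
  have hF0 : F 0 = 0 := by
    rw [hF]
    simp
  rw [hF0, sub_zero] at hFTC
  have hsplit : ∫ x in Set.Ioi (0:ℝ), f' x
      = (∫ x in Set.Ioi (0:ℝ), x ^ m * exp (-μ * x) * Real.log (1 + x))
        - ((m:ℝ)/μ) * (∫ x in Set.Ioi (0:ℝ), x ^ (m-1) * exp (-μ * x) * Real.log (1 + x))
        - (1/μ) * (∫ x in Set.Ioi (0:ℝ), x ^ m * exp (-μ * x) / (1 + x)) := by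
    have hAB : Integrable (fun x : ℝ => x ^ m * exp (-μ * x) * Real.log (1 + x)
        - ((m:ℝ)/μ) * (x ^ (m-1) * exp (-μ * x) * Real.log (1 + x)))
        (volume.restrict (Set.Ioi 0)) := hintA.sub (hintB.const_mul _)
    have hC : Integrable (fun x : ℝ => (1/μ) * (x ^ m * exp (-μ * x) / (1 + x)))
        (volume.restrict (Set.Ioi 0)) := hintC.const_mul _
    have hB : Integrable (fun x : ℝ => ((m:ℝ)/μ) * (x ^ (m-1) * exp (-μ * x) * Real.log (1 + x)))
        (volume.restrict (Set.Ioi 0)) := hintB.const_mul _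
    rw [hf']
    rw [integral_sub hAB hC, integral_sub hintA hB, integral_const_mul, integral_const_mul]
  rw [hsplit] at hFTC
  linear_combination hFTC


/-- For every nonnegative integer `m` and real `μ > 0`,
`∫_0^∞ x^m e^{−μx} ln(1+x) dx = m! · e^μ · Σ_{i=0}^m Γ(i−m, μ) / μ^{i+1}`,
where `Γ(·,·)` is the upper incomplete Gamma function. -/
theorem stmt_7 (m : ℕ) (μ : ℝ) (hμ : 0 < μ) :
    ∫ x in Set.Ioi (0 : ℝ), x ^ m * Real.exp (-μ * x) * Real.log (1 + x) =
      (Nat.factorial m : ℝ) * Real.exp μ *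
        ∑ i ∈ Finset.range (m + 1),
          upperIncompleteGamma ((i : ℝ) - m) μ / μ ^ (i + 1) := by
  induction m with
  | zero =>
    rw [ibp hμ 0, J_eq hμ 0]
    simp only [Nat.cast_zero, zero_div, zero_mul, zero_add, Nat.factorial_zero, Nat.cast_one,
      one_mul, Finset.sum_range_one, pow_one, neg_zero, sub_zero]
    field_simp
  | succ m ih =>
    rw [ibp hμ (m+1)]
    simp only [Nat.add_sub_cancel] at *
    rw [J_eq hμ (m+1), ih]
    conv_rhs => rw [Finset.sum_range_succ']
    have hterm : ∀ i ∈ Finset.range (m+1),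
        upperIncompleteGamma (((i+1 : ℕ) : ℝ) - ((m+1 : ℕ) : ℝ)) μ / μ ^ ((i+1) + 1)
          = upperIncompleteGamma ((i : ℝ) - (m : ℝ)) μ / μ ^ (i+1) * (1/μ) := by
      intro i _
      have h1 : ((i+1 : ℕ) : ℝ) - ((m+1 : ℕ) : ℝ) = (i : ℝ) - (m : ℝ) := by push_cast; ring
      rw [h1, pow_succ]
      field_simp
    rw [Finset.sum_congr rfl hterm, ← Finset.sum_mul]
    have h0 : upperIncompleteGamma (((0:ℕ) : ℝ) - ((m+1 : ℕ) : ℝ)) μ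
        = upperIncompleteGamma (-((m+1 : ℕ) : ℝ)) μ := by norm_num
    rw [h0]
    have hfac : (((m+1).factorial : ℕ) : ℝ) = ((m:ℝ)+1) * (m.factorial : ℝ) := by
      rw [Nat.factorial_succ]; push_cast; ring
    rw [hfac]
    push_cast
    field_simp
end

section
/- Let Φ : fin p → ℝ → ℝ and Ψ : fin n → ℝ → ℝ with n ≥ p, let Ψ_{i,j} be real constants for j = p+1,…,n, and let ξ, ξ̃ : ℝ → ℝ be functions such that all integrals below exist. Then ∫_{b ≥ x_1 ≥ … ≥ x_p ≥ a} det[Φ_i(x_j)]_{p×p} · det[M(x)]_{n×n} · (∏_{m=1}^p ξ(x_m)) · (Σ_{i=1}^p ξ̃(x_i)) dx = Σ_{k=1}^p det C^{(k)}, where M(x) has entries Ψ_i(x_j) for j ≤ p and Ψ_{i,j} for j > p, and the n×n matrix C^{(k)} has entries c^{(k)}_{i,j} = ∫_a^b Φ_i(x) Ψ_j(x) ξ(x) ξ̃(x)^{[j=k]} dx for j ≤ p (the factor ξ̃(x) present only when j = k) and c^{(k)}_{i,j} = Ψ_{i,j} for j > p. Here only the first p rows index of Φ appear in the p×p determinant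 with columns x_1,…,x_p. -/
open MeasureTheory Matrix Finset

/-- Uniqueness of the decreasing sorting permutation of an injective tuple. -/
lemma sorted_perm_unique {p : ℕ} {x : Fin p → ℝ} (hx : Function.Injective x)
    {σ τ : Equiv.Perm (Fin p)}
    (hσ : ∀ i j : Fin p, i ≤ j → x (σ j) ≤ x (σ i))
    (hτ : ∀ i j : Fin p, i ≤ j → x (τ j) ≤ x (τ i)) : σ = τ := by
  have hσ' : StrictAnti (x ∘ σ) :=
    Antitone.strictAnti_of_injective (fun i j h => hσ i j h) (hx.comp σ.injective)
  have hτ' : StrictAnti (x ∘ τ) :=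
    Antitone.strictAnti_of_injective (fun i j h => hτ i j h) (hx.comp τ.injective)
  have hgm : StrictMono (⇑(σ⁻¹ * τ) : Fin p → Fin p) := by
    intro i j hij
    have h2 : x (τ j) < x (τ i) := hτ' hij
    have : (x ∘ σ) ((σ⁻¹ * τ) j) < (x ∘ σ) ((σ⁻¹ * τ) i) := by
      simpa [Function.comp, Equiv.Perm.mul_apply] using h2
    exact hσ'.lt_iff_gt.mp this
  have hid : ∀ i, (σ⁻¹ * τ) i = i := by
    intro i
    have h1 : StrictMono.orderIsoOfSurjective _ hgm (σ⁻¹ * τ).surjective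
        = OrderIso.refl (Fin p) := Subsingleton.elim _ _
    have := congrArg (fun f : Fin p ≃o Fin p => f i) h1
    simpa using this
  refine Equiv.ext fun i => ?_
  have := hid i
  simp only [Equiv.Perm.mul_apply] at this
  calc σ i = σ (σ⁻¹ (τ i)) := by rw [this]
  _ = τ i := by simp

/-- The set of non-injective tuples (as a union of hyperplanes) is null. -/
lemma noninj_null (p : ℕ) :
    volume (⋃ (q : Fin p × Fin p) (_ : q.1 ≠ q.2), {x : Fin p → ℝ | x q.1 = x q.2}) = 0 := by
  refine measure_iUnion_null fun q => measure_iUnion_null fun hq => ?_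
  have hker : {x : Fin p → ℝ | x q.1 = x q.2}
      = (LinearMap.ker ((LinearMap.proj q.1 : (Fin p → ℝ) →ₗ[ℝ] ℝ)
          - LinearMap.proj q.2) : Set (Fin p → ℝ)) := by
    ext x
    simp [LinearMap.mem_ker, sub_eq_zero]
  rw [hker]
  refine Measure.addHaar_submodule _ _ ?_
  intro h
  have hmem : Pi.single q.1 (1 : ℝ) ∈ LinearMap.ker
      ((LinearMap.proj q.1 : (Fin p → ℝ) →ₗ[ℝ] ℝ) - LinearMap.proj q.2) := by
    rw [h]; trivial
  simp only [LinearMap.mem_ker, LinearMap.sub_apply, LinearMap.proj_apply] at hmem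
  rw [Pi.single_eq_same, Pi.single_eq_of_ne (Ne.symm hq)] at hmem
  norm_num at hmem

lemma noninj_measurable (p : ℕ) :
    MeasurableSet (⋃ (q : Fin p × Fin p) (_ : q.1 ≠ q.2), {x : Fin p → ℝ | x q.1 = x q.2}) := by
  refine MeasurableSet.iUnion fun q => MeasurableSet.iUnion fun _ => ?_
  exact (isClosed_eq (continuous_apply q.1) (continuous_apply q.2)).measurableSet

/-- indicator of a cube applied to a product of coordinate functions. -/
lemma indicator_cube_prod {p : ℕ} (s : Set ℝ) (g : Fin p → ℝ → ℝ) :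
    (Set.univ.pi fun _ : Fin p => s).indicator (fun x => ∏ j, g j (x j))
      = fun x => ∏ j, s.indicator (g j) (x j) := by
  funext x
  by_cases hx : x ∈ Set.univ.pi fun _ : Fin p => s
  · rw [Set.indicator_of_mem hx]
    exact Finset.prod_congr rfl fun j _ => (Set.indicator_of_mem (hx j trivial) _).symm
  · rw [Set.indicator_of_notMem hx]
    rw [Set.mem_pi] at hx
    push_neg at hx
    obtain ⟨j, _, hj⟩ := hx
    exact (Finset.prod_eq_zero (mem_univ j) (Set.indicator_of_notMem hj _)).symm

lemma cube_prod_integrable {p : ℕ} {a b : ℝ} {g : Fin p → ℝ → ℝ}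
    (hg : ∀ j, IntegrableOn (g j) (Set.Icc a b)) :
    IntegrableOn (fun x : Fin p → ℝ => ∏ j, g j (x j))
      (Set.univ.pi fun _ : Fin p => Set.Icc a b) := by
  have hm : MeasurableSet (Set.univ.pi fun _ : Fin p => Set.Icc a b) :=
    MeasurableSet.univ_pi fun _ => measurableSet_Icc
  rw [← integrable_indicator_iff hm, indicator_cube_prod]
  exact Integrable.fintype_prod fun j => (integrable_indicator_iff measurableSet_Icc).2 (hg j)

lemma cube_prod_integral {p : ℕ} {a b : ℝ} {g : Fin p → ℝ → ℝ}
    (hg : ∀ j, IntegrableOn (g j) (Set.Icc a b)) :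
    ∫ x in Set.univ.pi fun _ : Fin p => Set.Icc a b, ∏ j, g j (x j)
      = ∏ j, ∫ t in Set.Icc a b, g j t := by
  have hm : MeasurableSet (Set.univ.pi fun _ : Fin p => Set.Icc a b) :=
    MeasurableSet.univ_pi fun _ => measurableSet_Icc
  rw [← integral_indicator hm, indicator_cube_prod,
    MeasureTheory.integral_fintype_prod_volume_eq_prod
      (f := fun j => (Set.Icc a b).indicator (g j))]
  exact Finset.prod_congr rfl fun j _ => integral_indicator measurableSet_Icc

lemma sym_decomp {p : ℕ} {a b : ℝ} {F : (Fin p → ℝ) → ℝ}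
    (hF : IntegrableOn F (Set.univ.pi fun _ : Fin p => Set.Icc a b))
    (hsym : ∀ (σ : Equiv.Perm (Fin p)) (x : Fin p → ℝ), F (x ∘ σ) = F x) :
    ∫ x in Set.univ.pi (fun _ : Fin p => Set.Icc a b), F x
      = (p.factorial : ℝ) * ∫ x in {x : Fin p → ℝ |
          (∀ i j : Fin p, i ≤ j → x j ≤ x i) ∧ ∀ i, x i ∈ Set.Icc a b}, F x := by
  set cube : Set (Fin p → ℝ) := Set.univ.pi fun _ : Fin p => Set.Icc a b with hcube
  set S : Set (Fin p → ℝ) := {x : Fin p → ℝ |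
      (∀ i j : Fin p, i ≤ j → x j ≤ x i) ∧ ∀ i, x i ∈ Set.Icc a b} with hS
  have hSm : MeasurableSet S := by
    have : S = (⋂ (i : Fin p) (j : Fin p) (_ : i ≤ j), {x : Fin p → ℝ | x j ≤ x i})
        ∩ ⋂ i, (fun x : Fin p → ℝ => x i) ⁻¹' Set.Icc a b := by
      ext x
      simp [hS, Set.mem_iInter, forall_and]
    rw [this]
    refine MeasurableSet.inter ?_ ?_
    · exact MeasurableSet.iInter fun i => MeasurableSet.iInter fun j =>
        MeasurableSet.iInter fun _ =>
          (isClosed_le (continuous_apply j) (continuous_apply i)).measurableSet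
    · exact MeasurableSet.iInter fun i =>
        measurableSet_Icc.preimage (measurable_pi_apply i)
  set N : Set (Fin p → ℝ) :=
    ⋃ (q : Fin p × Fin p) (_ : q.1 ≠ q.2), {x : Fin p → ℝ | x q.1 = x q.2} with hN
  have hNnull : volume N = 0 := noninj_null p
  have hNm : MeasurableSet N := noninj_measurable p
  have hNinj : ∀ x : Fin p → ℝ, x ∉ N → Function.Injective x := by
    intro x hx i j hij
    by_contra hne
    exact hx (Set.mem_iUnion.2 ⟨(i, j), Set.mem_iUnion.2 ⟨hne, hij⟩⟩)
  set A : Equiv.Perm (Fin p) → Set (Fin p → ℝ) := fun σ => (fun x => x ∘ σ) ⁻¹' S with hA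
  have hAm : ∀ σ, MeasurableSet (A σ) := by
    intro σ
    exact hSm.preimage (measurable_pi_lambda _ fun i => measurable_pi_apply (σ i))
  have hAsub : ∀ σ, A σ ⊆ cube := by
    intro σ x hx
    intro i _
    have := hx.2 (σ⁻¹ i)
    simpa using this
  have hAint : ∀ σ : Equiv.Perm (Fin p), ∫ x in A σ, F x = ∫ x in S, F x := by
    intro σ
    set T := MeasurableEquiv.piCongrLeft (fun _ : Fin p => ℝ) (σ⁻¹ : Equiv.Perm (Fin p)) with hT
    have hTx : ∀ x : Fin p → ℝ, T x = x ∘ σ := by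
      intro x; funext i; simp [hT, MeasurableEquiv.piCongrLeft, Equiv.Perm.inv_def, Equiv.piCongrLeft_apply_eq_cast]
    have hmp := MeasureTheory.volume_measurePreserving_piCongrLeft (fun _ : Fin p => ℝ)
      (σ⁻¹ : Equiv.Perm (Fin p))
    have key := hmp.setIntegral_preimage_emb (T.measurableEmbedding) F S
    have hpt : ∀ x : Fin p → ℝ, F (T x) = F x := fun x => by rw [hTx, hsym]
    simp only [hpt] at key
    have hset : ⇑T ⁻¹' S = A σ := by
      ext x
      simp only [Set.mem_preimage, hA, hTx]
    rw [← hset]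
    simpa only [← hT, hpt] using key
  have hAint' : ∀ σ : Equiv.Perm (Fin p), ∫ x in A σ \ N, F x = ∫ x in S, F x := by
    intro σ
    rw [← hAint σ]
    refine setIntegral_congr_set ?_
    refine (MeasureTheory.diff_ae_eq_self (μ := volume)).2 ?_
    exact measure_mono_null Set.inter_subset_right hNnull
  have hUsub : (⋃ σ ∈ (univ : Finset (Equiv.Perm (Fin p))), A σ \ N) ⊆ cube := by
    intro x hx
    simp only [Set.mem_iUnion] at hx
    obtain ⟨σ, _, hx, _⟩ := hx
    exact hAsub σ hx
  have hcover : cube \ (⋃ σ ∈ (univ : Finset (Equiv.Perm (Fin p))), A σ \ N) ⊆ N := by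
    intro x ⟨hx, hxU⟩
    by_contra hxN
    apply hxU
    set σ : Equiv.Perm (Fin p) := Tuple.sort x * Fin.revPerm with hσ
    simp only [Set.mem_iUnion]
    refine ⟨σ, mem_univ σ, ⟨?_, ?_⟩, hxN⟩
    · intro i j hij
      have := Tuple.monotone_sort x (Fin.rev_le_rev.2 hij)
      simpa [hσ, Equiv.Perm.mul_apply] using this
    · intro i
      exact hx (σ i) trivial
  have hUeq : cube =ᵐ[volume] ⋃ σ ∈ (univ : Finset (Equiv.Perm (Fin p))), A σ \ N := by
    rw [MeasureTheory.ae_eq_set]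
    constructor
    · exact measure_mono_null hcover hNnull
    · rw [Set.diff_eq_empty.2 hUsub]
      exact measure_empty
  rw [setIntegral_congr_set hUeq,
    integral_biUnion_finset univ (fun σ _ => (hAm σ).diff hNm)
      (fun σ _ τ _ hne => by
        rw [Function.onFun, Set.disjoint_left]
        rintro x ⟨hxσ, hxN⟩ ⟨hxτ, _⟩
        exact hne (sorted_perm_unique (hNinj x hxN) hxσ.1 hxτ.1))
      (fun σ _ => hF.mono_set ((Set.diff_subset).trans (hAsub σ)))]
  simp only [hAint']
  rw [Finset.sum_const, card_univ, Fintype.card_perm, Fintype.card_fin, nsmul_eq_mul]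

lemma expand3 {α β γ : Type*} [Fintype α] [Fintype β] [Fintype γ]
    (f : α → ℝ) (g : β → ℝ) (C : ℝ) (d : γ → ℝ) :
    (∑ a, f a) * (∑ b, g b) * C * (∑ k, d k)
      = ∑ a, ∑ b, ∑ k, f a * g b * C * d k := by
  rw [Finset.sum_mul_sum, Finset.sum_mul, Finset.sum_mul]
  refine Finset.sum_congr rfl fun a _ => ?_
  rw [Finset.sum_mul, Finset.sum_mul]
  refine Finset.sum_congr rfl fun b _ => ?_
  rw [Finset.mul_sum]

/-- Theorem 2 (Appendix B) of Chiani–Win–Shin: an identity for multiple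
integrals over the ordered simplex `{b ≥ x₁ ≥ … ≥ x_p ≥ a}` involving the
product of a `p×p` alternant determinant `det[Φᵢ(x_j)]`, an `n×n` bordered
determinant `det M(x)` (with `M(x)ᵢⱼ = Ψᵢ(x_j)` for `j ≤ p` and constants
`Ψᵢⱼ` for `j > p`, `n ≥ p`), a multiplicative weight `∏ ξ(x_m)` and an
additive factor `Σ ξ̃(x_i)`.  The integral equals `Σ_{k=1}^p det C^{(k)}`,
where in column `j ≤ p` the entry of `C^{(k)}` is the pairing
`∫_a^b Φ(x) Ψᵢ(x) ξ(x) U_{k,j}(ξ̃(x)) dx` (the factor `ξ̃` being inserted only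
when `j = k`), and columns `j > p` keep the constants `Ψᵢⱼ`. -/
theorem stmt_8 (p n : ℕ) (hpn : p ≤ n) (a b : ℝ) (hab : a ≤ b)
    (Φ : Fin p → ℝ → ℝ) (Ψ : Fin n → ℝ → ℝ) (Ψc : Fin n → Fin n → ℝ)
    (ξ ξt : ℝ → ℝ)
    (hΦ : ∀ i, Measurable (Φ i)) (hΨ : ∀ i, Measurable (Ψ i))
    (hξ : Measurable ξ) (hξt : Measurable ξt)
    (hint : ∀ (j : Fin p) (i : Fin n),
      IntegrableOn (fun t => Φ j t * Ψ i t * ξ t) (Set.Icc a b))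
    (hint' : ∀ (j : Fin p) (i : Fin n),
      IntegrableOn (fun t => Φ j t * Ψ i t * ξ t * ξt t) (Set.Icc a b)) :
    (∫ x in {x : Fin p → ℝ |
        (∀ i j : Fin p, i ≤ j → x j ≤ x i) ∧ ∀ i, x i ∈ Set.Icc a b},
      Matrix.det (Matrix.of fun i j : Fin p => Φ i (x j)) *
        Matrix.det (Matrix.of fun i j : Fin n =>
          if h : (j : ℕ) < p then Ψ i (x ⟨j, h⟩) else Ψc i j) *
        (∏ m, ξ (x m)) * (∑ i, ξt (x i))) =
      ∑ k : Fin p,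
        Matrix.det (Matrix.of fun i j : Fin n =>
          if h : (j : ℕ) < p then
            ∫ t in Set.Icc a b,
              Φ ⟨j, h⟩ t * Ψ i t * ξ t * (if (j : ℕ) = (k : ℕ) then ξt t else 1)
          else Ψc i j) := by
  classical
  have hfac : (p.factorial : ℝ) ≠ 0 := Nat.cast_ne_zero.2 (Nat.factorial_ne_zero p)
  -- the extension of a permutation of `Fin p` to `Fin n` fixing the tail
  set eqv : Fin p ≃ {j : Fin n // (j : ℕ) < p} :=
    { toFun := fun j => ⟨Fin.castLE hpn j, by simpa using j.isLt⟩
      invFun := fun j => ⟨j.1.1, j.2⟩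
      left_inv := fun j => by ext; simp
      right_inv := fun j => by ext; simp } with heqv
  set pext : Equiv.Perm (Fin p) → Equiv.Perm (Fin n) :=
    fun σ => σ.extendDomain eqv with hpext
  have hpext1 : ∀ (σ : Equiv.Perm (Fin p)) (j : Fin p),
      pext σ (Fin.castLE hpn j) = Fin.castLE hpn (σ j) := fun σ j =>
    σ.extendDomain_apply_image eqv j
  have hpext2 : ∀ (σ : Equiv.Perm (Fin p)) (j : Fin n), ¬ (j : ℕ) < p → pext σ j = j :=
    fun σ _ hj => σ.extendDomain_apply_not_subtype eqv hj
  have hpextsign : ∀ σ : Equiv.Perm (Fin p),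
      Equiv.Perm.sign (pext σ) = Equiv.Perm.sign σ :=
    fun σ => Equiv.Perm.sign_extendDomain σ eqv
  have hpextinv : ∀ σ : Equiv.Perm (Fin p), (pext σ)⁻¹ = pext σ⁻¹ :=
    fun σ => Equiv.Perm.extendDomain_inv σ eqv
  set Q : Finset (Fin n) := univ.filter (fun j : Fin n => ¬ (j : ℕ) < p) with hQ
  have hsplit : ∀ h : Fin n → ℝ,
      (∏ j, h j) = (∏ j : Fin p, h (Fin.castLE hpn j)) * ∏ j ∈ Q, h j := by
    intro h
    rw [← Finset.prod_filter_mul_prod_filter_not univ (fun j : Fin n => (j : ℕ) < p) h]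
    congr 1
    rw [show univ.filter (fun j : Fin n => (j : ℕ) < p) = univ.map (Fin.castLEEmb hpn) by
      ext j
      constructor
      · intro hj
        rw [Finset.mem_map]
        exact ⟨⟨(j : ℕ), (mem_filter.1 hj).2⟩, mem_univ _, Fin.ext (by simp)⟩
      · intro hj
        rw [Finset.mem_map] at hj
        obtain ⟨i, _, rfl⟩ := hj
        exact mem_filter.2 ⟨mem_univ _, by simpa [Fin.castLEEmb] using i.isLt⟩,
      Finset.prod_map]
    rfl
  set Bord : Equiv.Perm (Fin n) → ℝ := fun τ => ∏ j ∈ Q, Ψc (τ j) j with hBord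
  set c : Fin p → Fin n → Fin p → ℝ := fun k i j =>
    ∫ t in Set.Icc a b, Φ j t * Ψ i t * ξ t *
      (if (j : ℕ) = (k : ℕ) then ξt t else 1) with hc
  set gg : Equiv.Perm (Fin p) → Equiv.Perm (Fin n) → Fin p → Fin p → ℝ → ℝ :=
    fun σ τ k j t => Φ (σ j) t * Ψ (τ (Fin.castLE hpn j)) t * ξ t *
      (if j = k then ξt t else 1) with hgg
  have hggint : ∀ σ τ k j, IntegrableOn (gg σ τ k j) (Set.Icc a b) := by
    intro σ τ k j
    by_cases hjk : j = k
    · simp only [hgg, hjk, if_pos]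
      exact hint' (σ k) (τ (Fin.castLE hpn k))
    · simp only [hgg, if_neg hjk, mul_one]
      exact hint (σ j) (τ (Fin.castLE hpn j))
  set cube : Set (Fin p → ℝ) := Set.univ.pi fun _ : Fin p => Set.Icc a b with hcube
  set F : (Fin p → ℝ) → ℝ := fun x =>
    Matrix.det (Matrix.of fun i j : Fin p => Φ i (x j)) *
      Matrix.det (Matrix.of fun i j : Fin n =>
        if h : (j : ℕ) < p then Ψ i (x ⟨j, h⟩) else Ψc i j) *
      (∏ m, ξ (x m)) * (∑ i, ξt (x i)) with hFdef
  -- pointwise expansion of the integrand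
  have hsplitD : ∀ (x : Fin p → ℝ) (τ : Equiv.Perm (Fin n)),
      (∏ j : Fin n, if h : (j : ℕ) < p then Ψ (τ j) (x ⟨(j : ℕ), h⟩) else Ψc (τ j) j)
        = (∏ j : Fin p, Ψ (τ (Fin.castLE hpn j)) (x j)) * Bord τ := by
    intro x τ
    rw [hsplit]
    congr 1
    · refine Finset.prod_congr rfl fun j _ => ?_
      rw [dif_pos (show ((Fin.castLE hpn j : Fin n) : ℕ) < p by simpa using j.isLt)]
      simp
    · refine Finset.prod_congr rfl fun j hj => ?_
      rw [dif_neg (by simpa [hQ] using (mem_filter.1 hj).2)]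
  have hFexp : ∀ x : Fin p → ℝ, F x =
      ∑ σ : Equiv.Perm (Fin p), ∑ τ : Equiv.Perm (Fin n), ∑ k : Fin p,
        (((Equiv.Perm.sign σ : ℤ) : ℝ) * ((Equiv.Perm.sign τ : ℤ) : ℝ) * Bord τ)
          * ∏ j : Fin p, gg σ τ k j (x j) := by
    intro x
    rw [hFdef]
    simp only []
    rw [det_apply', det_apply', expand3]
    simp only [of_apply]
    refine Finset.sum_congr rfl fun σ _ => Finset.sum_congr rfl fun τ _ =>
      Finset.sum_congr rfl fun k _ => ?_
    rw [hsplitD x τ]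
    simp only [hgg]
    rw [Finset.prod_mul_distrib, Finset.prod_mul_distrib, Finset.prod_mul_distrib,
      Finset.prod_ite_eq' univ k (fun j => ξt (x j))]
    simp only [mem_univ, if_true]
    ring
  -- integrability
  have hGint : ∀ σ τ k, IntegrableOn (fun x : Fin p → ℝ =>
      (((Equiv.Perm.sign σ : ℤ) : ℝ) * ((Equiv.Perm.sign τ : ℤ) : ℝ) * Bord τ)
        * ∏ j : Fin p, gg σ τ k j (x j)) cube := fun σ τ k =>
    (cube_prod_integrable (fun j => hggint σ τ k j)).const_mul _
  have hFint : IntegrableOn F cube := by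
    refine (MeasureTheory.integrable_finset_sum univ fun σ _ =>
      MeasureTheory.integrable_finset_sum univ fun τ _ =>
      MeasureTheory.integrable_finset_sum univ fun k _ => hGint σ τ k).congr ?_
    exact Filter.Eventually.of_forall fun x => (hFexp x).symm
  -- symmetry of the integrand
  have hsymF : ∀ (σ : Equiv.Perm (Fin p)) (x : Fin p → ℝ), F (x ∘ σ) = F x := by
    intro σ x
    rw [hFdef]
    simp only [Function.comp_apply]
    have h1 : (Matrix.of fun i j : Fin p => Φ i (x (σ j)))
        = (Matrix.of fun i j : Fin p => Φ i (x j)).submatrix id σ := by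
      ext i j; simp
    have h2 : (Matrix.of fun i j : Fin n =>
          if h : (j : ℕ) < p then Ψ i (x (σ ⟨j, h⟩)) else Ψc i j)
        = (Matrix.of fun i j : Fin n =>
          if h : (j : ℕ) < p then Ψ i (x ⟨j, h⟩) else Ψc i j).submatrix id (pext σ) := by
      ext i j
      simp only [submatrix_apply, of_apply, id_eq]
      by_cases hj : (j : ℕ) < p
      · have e1 : pext σ j = Fin.castLE hpn (σ ⟨(j : ℕ), hj⟩) := by
          conv_lhs => rw [show j = Fin.castLE hpn (⟨(j : ℕ), hj⟩ : Fin p) from Fin.ext (by simp)]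
          rw [hpext1]
        rw [dif_pos hj, e1, dif_pos (show ((Fin.castLE hpn (σ ⟨(j : ℕ), hj⟩) : Fin n) : ℕ) < p by
          simpa using (σ ⟨(j : ℕ), hj⟩).isLt)]
        simp
      · rw [dif_neg hj, hpext2 σ j hj, dif_neg hj]
    rw [h1, h2, det_permute', det_permute', hpextsign,
      Equiv.prod_comp σ (fun m => ξ (x m)), Equiv.sum_comp σ (fun m => ξt (x m))]
    rcases Int.units_eq_one_or (Equiv.Perm.sign σ) with h | h <;> rw [h] <;> push_cast <;> ring
  -- expansion of the right-hand side determinants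
  have hdet2 : ∀ k : Fin p,
      Matrix.det (Matrix.of fun i j : Fin n =>
        if h : (j : ℕ) < p then
          ∫ t in Set.Icc a b,
            Φ ⟨j, h⟩ t * Ψ i t * ξ t * (if (j : ℕ) = (k : ℕ) then ξt t else 1)
        else Ψc i j)
      = ∑ τ : Equiv.Perm (Fin n), ((Equiv.Perm.sign τ : ℤ) : ℝ) *
          ((∏ j : Fin p, c k (τ (Fin.castLE hpn j)) j) * Bord τ) := by
    intro k
    rw [det_apply']
    refine Finset.sum_congr rfl fun τ _ => ?_
    congr 1
    simp only [of_apply]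
    rw [hsplit]
    congr 1
    · refine Finset.prod_congr rfl fun j _ => ?_
      rw [dif_pos (show ((Fin.castLE hpn j : Fin n) : ℕ) < p by simpa using j.isLt)]
      simp only [hc]
      simp
    · refine Finset.prod_congr rfl fun j hj => ?_
      rw [dif_neg (by simpa [hQ] using (mem_filter.1 hj).2)]
  -- combinatorial reindexing
  have hcomb : ∀ σ : Equiv.Perm (Fin p),
      (∑ τ : Equiv.Perm (Fin n), ∑ k : Fin p,
        (((Equiv.Perm.sign σ : ℤ) : ℝ) * ((Equiv.Perm.sign τ : ℤ) : ℝ) * Bord τ)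
          * ∏ j : Fin p, ∫ t in Set.Icc a b, gg σ τ k j t)
      = ∑ k : Fin p, ∑ τ : Equiv.Perm (Fin n), ((Equiv.Perm.sign τ : ℤ) : ℝ) *
          ((∏ j : Fin p, c k (τ (Fin.castLE hpn j)) j) * Bord τ) := by
    intro σ
    have hterm : ∀ (τ : Equiv.Perm (Fin n)) (k : Fin p),
        (((Equiv.Perm.sign σ : ℤ) : ℝ) * ((Equiv.Perm.sign τ : ℤ) : ℝ) * Bord τ)
          * ∏ j : Fin p, ∫ t in Set.Icc a b, gg σ τ k j t
        = (fun q : Equiv.Perm (Fin n) × Fin p => ((Equiv.Perm.sign q.1 : ℤ) : ℝ) *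
            ((∏ j : Fin p, c q.2 (q.1 (Fin.castLE hpn j)) j) * Bord q.1))
          ((Equiv.prodCongr (Equiv.mulRight (pext σ)⁻¹) σ) (τ, k)) := by
      intro τ k
      simp only [Equiv.prodCongr_apply, Equiv.coe_mulRight, Prod.map]
      have hB : Bord (τ * (pext σ)⁻¹) = Bord τ := by
        refine Finset.prod_congr rfl fun j hj => ?_
        rw [Equiv.Perm.mul_apply, hpextinv, hpext2 σ⁻¹ j (by simpa [hQ] using (mem_filter.1 hj).2)]
      have hsgn : ((Equiv.Perm.sign (τ * (pext σ)⁻¹) : ℤ) : ℝ)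
          = ((Equiv.Perm.sign σ : ℤ) : ℝ) * ((Equiv.Perm.sign τ : ℤ) : ℝ) := by
        rw [Equiv.Perm.sign_mul, Equiv.Perm.sign_inv, hpextsign]
        push_cast
        ring
      have hprod : (∏ j : Fin p, c (σ k) ((τ * (pext σ)⁻¹) (Fin.castLE hpn j)) j)
          = ∏ j : Fin p, ∫ t in Set.Icc a b, gg σ τ k j t := by
        rw [← Equiv.prod_comp σ
          (fun j => c (σ k) ((τ * (pext σ)⁻¹) (Fin.castLE hpn j)) j)]
        refine Finset.prod_congr rfl fun j _ => ?_
        have h5 : (τ * (pext σ)⁻¹) (Fin.castLE hpn (σ j)) = τ (Fin.castLE hpn j) := by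
          rw [Equiv.Perm.mul_apply]
          congr 1
          rw [Equiv.Perm.inv_eq_iff_eq]
          exact (hpext1 σ j).symm
        rw [h5]
        simp only [hc, hgg, Fin.val_eq_val, Equiv.apply_eq_iff_eq]
      rw [hB, hsgn, hprod]
      ring
    calc (∑ τ : Equiv.Perm (Fin n), ∑ k : Fin p,
        (((Equiv.Perm.sign σ : ℤ) : ℝ) * ((Equiv.Perm.sign τ : ℤ) : ℝ) * Bord τ)
          * ∏ j : Fin p, ∫ t in Set.Icc a b, gg σ τ k j t)
        = ∑ q : Equiv.Perm (Fin n) × Fin p,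
            (fun q : Equiv.Perm (Fin n) × Fin p => ((Equiv.Perm.sign q.1 : ℤ) : ℝ) *
              ((∏ j : Fin p, c q.2 (q.1 (Fin.castLE hpn j)) j) * Bord q.1))
            ((Equiv.prodCongr (Equiv.mulRight (pext σ)⁻¹) σ) q) := by
          rw [Fintype.sum_prod_type]
          exact Finset.sum_congr rfl fun τ _ => Finset.sum_congr rfl fun k _ => hterm τ k
      _ = ∑ q : Equiv.Perm (Fin n) × Fin p, ((Equiv.Perm.sign q.1 : ℤ) : ℝ) *
            ((∏ j : Fin p, c q.2 (q.1 (Fin.castLE hpn j)) j) * Bord q.1) :=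
          Equiv.sum_comp (Equiv.prodCongr (Equiv.mulRight (pext σ)⁻¹) σ)
            (fun q : Equiv.Perm (Fin n) × Fin p => ((Equiv.Perm.sign q.1 : ℤ) : ℝ) *
              ((∏ j : Fin p, c q.2 (q.1 (Fin.castLE hpn j)) j) * Bord q.1))
      _ = _ := by
          rw [Fintype.sum_prod_type, Finset.sum_comm]
  -- computation of the cube integral
  have hcubeR : ∫ x in cube, F x = (p.factorial : ℝ) *
      ∑ k : Fin p,
        Matrix.det (Matrix.of fun i j : Fin n =>
          if h : (j : ℕ) < p then
            ∫ t in Set.Icc a b,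
              Φ ⟨j, h⟩ t * Ψ i t * ξ t * (if (j : ℕ) = (k : ℕ) then ξt t else 1)
          else Ψc i j) := by
    have e1 : ∫ x in cube, F x = ∑ σ : Equiv.Perm (Fin p), ∑ τ : Equiv.Perm (Fin n),
        ∑ k : Fin p,
        (((Equiv.Perm.sign σ : ℤ) : ℝ) * ((Equiv.Perm.sign τ : ℤ) : ℝ) * Bord τ)
          * ∏ j : Fin p, ∫ t in Set.Icc a b, gg σ τ k j t := by
      rw [show F = fun x => ∑ σ : Equiv.Perm (Fin p), ∑ τ : Equiv.Perm (Fin n), ∑ k : Fin p,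
          (((Equiv.Perm.sign σ : ℤ) : ℝ) * ((Equiv.Perm.sign τ : ℤ) : ℝ) * Bord τ)
            * ∏ j : Fin p, gg σ τ k j (x j) from funext hFexp]
      rw [MeasureTheory.integral_finset_sum _ (fun σ _ =>
        MeasureTheory.integrable_finset_sum _ fun τ _ =>
        MeasureTheory.integrable_finset_sum _ fun k _ => hGint σ τ k)]
      refine Finset.sum_congr rfl fun σ _ => ?_
      rw [MeasureTheory.integral_finset_sum _ (fun τ _ =>
        MeasureTheory.integrable_finset_sum _ fun k _ => hGint σ τ k)]
      refine Finset.sum_congr rfl fun τ _ => ?_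
      rw [MeasureTheory.integral_finset_sum _ (fun k _ => hGint σ τ k)]
      refine Finset.sum_congr rfl fun k _ => ?_
      rw [MeasureTheory.integral_const_mul, cube_prod_integral (fun j => hggint σ τ k j)]
    rw [e1]
    have e2 : ∀ σ : Equiv.Perm (Fin p), (∑ τ : Equiv.Perm (Fin n), ∑ k : Fin p,
        (((Equiv.Perm.sign σ : ℤ) : ℝ) * ((Equiv.Perm.sign τ : ℤ) : ℝ) * Bord τ)
          * ∏ j : Fin p, ∫ t in Set.Icc a b, gg σ τ k j t)
        = ∑ k : Fin p,
          Matrix.det (Matrix.of fun i j : Fin n =>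
            if h : (j : ℕ) < p then
              ∫ t in Set.Icc a b,
                Φ ⟨j, h⟩ t * Ψ i t * ξ t * (if (j : ℕ) = (k : ℕ) then ξt t else 1)
            else Ψc i j) := by
      intro σ
      rw [hcomb σ]
      exact Finset.sum_congr rfl fun k _ => (hdet2 k).symm
    simp only [e2]
    rw [Finset.sum_const, card_univ, Fintype.card_perm, Fintype.card_fin, nsmul_eq_mul]
  have hcubeS := sym_decomp hFint hsymF
  exact mul_left_cancel₀ hfac (hcubeS.symm.trans hcubeR)
end

section
/- Special case of the determinant integral identity (p = n, no constant border): for functions Φ_i, Ψ_j, ξ, ξ̃ : [a,b] → ℝ integrable as needed, ∫_{b ≥ x_1 ≥ … ≥ x_n ≥ a} det[Φ_i(x_j)] det[Ψ_i(x_j)] ∏_{m=1}^n ξ(x_m) · Σ_{i=1}^n ξ̃(x_i) dx = Σ_{k=1}^n det[ ∫_a^b Φ_i(x) Ψ_j(x) ξ(x) (ξ̃(x) if j = k else 1) dx ]_{i,j=1}^n. -/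
open MeasureTheory Matrix Finset

lemma pi_prod_aux {n : ℕ} (μ : Measure ℝ) [IsFiniteMeasure μ] (f : Fin n → ℝ → ℝ)
    (hf : ∀ i, Integrable (f i) μ) :
    Integrable (fun x : Fin n → ℝ => ∏ i, f i (x i)) (Measure.pi fun _ => μ) ∧
      ∫ x, ∏ i, f i (x i) ∂(Measure.pi fun _ => μ) = ∏ i, ∫ t, f i t ∂μ := by
  induction n with
  | zero =>
      constructor
      · simp only [Finset.univ_eq_empty, Finset.prod_empty]
        exact integrable_const 1
      · simp [Measure.real, Measure.pi_univ]
  | succ n ih =>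
      have hmp := (measurePreserving_piFinSuccAbove (fun _ : Fin (n + 1) => μ) 0).symm
      have hemb := (MeasurableEquiv.piFinSuccAbove (fun _ : Fin (n + 1) => ℝ) 0).symm.measurableEmbedding
      obtain ⟨ih1, ih2⟩ := ih (fun i => f i.succ) (fun i => hf _)
      have key : ∀ y : ℝ × (Fin n → ℝ),
          (∏ i, f i (((MeasurableEquiv.piFinSuccAbove (fun _ : Fin (n + 1) => ℝ) 0).symm y) i))
            = f 0 y.1 * ∏ i : Fin n, f i.succ (y.2 i) := by
        intro y
        simp_rw [MeasurableEquiv.piFinSuccAbove_symm_apply, Fin.insertNthEquiv,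
          Fin.prod_univ_succ, Fin.insertNth_zero]
        simp [Fin.zero_succAbove, Fin.cons_zero, Fin.cons_succ]
      constructor
      · rw [← hmp.integrable_comp_emb hemb]
        have : ((fun x : Fin (n+1) → ℝ => ∏ i, f i (x i)) ∘
            (MeasurableEquiv.piFinSuccAbove (fun _ : Fin (n + 1) => ℝ) 0).symm)
            = fun y : ℝ × (Fin n → ℝ) => f 0 y.1 * ∏ i : Fin n, f i.succ (y.2 i) := by
          funext y; exact key y
        rw [this]
        exact (hf 0).mul_prod ih1
      · rw [← hmp.integral_comp']
        calc ∫ y : ℝ × (Fin n → ℝ), ∏ i, f i (((MeasurableEquiv.piFinSuccAbove (fun _ : Fin (n + 1) => ℝ) 0).symm y) i) ∂(μ.prod (Measure.pi fun _ => μ))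
            = ∫ y : ℝ × (Fin n → ℝ), f 0 y.1 * ∏ i : Fin n, f i.succ (y.2 i) ∂(μ.prod (Measure.pi fun _ => μ)) := by
              simp_rw [key]
          _ = (∫ t, f 0 t ∂μ) * ∏ i : Fin n, ∫ t, f i.succ t ∂μ := by
              rw [show (∫ y : ℝ × (Fin n → ℝ), f 0 y.1 * ∏ i : Fin n, f i.succ (y.2 i) ∂(μ.prod (Measure.pi fun _ => μ)))
                  = (∫ t, f 0 t ∂μ) * ∫ x : Fin n → ℝ, ∏ i : Fin n, f i.succ (x i) ∂(Measure.pi fun _ => μ)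
                from integral_prod_mul (f 0) (fun v : Fin n → ℝ => ∏ i : Fin n, f i.succ (v i)), ih2]
          _ = ∏ i, ∫ t, f i t ∂μ := by rw [Fin.prod_univ_succ]
lemma alg_key {n : ℕ} (A A' : Fin n → Fin n → ℝ) :
    (∑ i : Fin n, ∑ σ : Equiv.Perm (Fin n), ∑ τ : Equiv.Perm (Fin n),
      ((Equiv.Perm.sign σ : ℤ) : ℝ) * ((Equiv.Perm.sign τ : ℤ) : ℝ) *
        ∏ j, (if j = i then A' (σ j) (τ j) else A (σ j) (τ j)))
    = (n.factorial : ℝ) * ∑ k : Fin n, ∑ ρ : Equiv.Perm (Fin n),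
        ((Equiv.Perm.sign ρ : ℤ) : ℝ) * ∏ q, (if q = k then A' (ρ q) q else A (ρ q) q) := by
  set D : Fin n → ℝ := fun k => ∑ ρ : Equiv.Perm (Fin n),
      ((Equiv.Perm.sign ρ : ℤ) : ℝ) * ∏ q, (if q = k then A' (ρ q) q else A (ρ q) q) with hD
  have step1 : ∀ (i : Fin n) (τ : Equiv.Perm (Fin n)),
      (∑ σ : Equiv.Perm (Fin n), ((Equiv.Perm.sign σ : ℤ) : ℝ) * ((Equiv.Perm.sign τ : ℤ) : ℝ) *
        ∏ j, (if j = i then A' (σ j) (τ j) else A (σ j) (τ j))) = D (τ i) := by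
    intro i τ
    rw [← Equiv.sum_comp (Equiv.mulRight τ)
      (fun σ => ((Equiv.Perm.sign σ : ℤ) : ℝ) * ((Equiv.Perm.sign τ : ℤ) : ℝ) *
        ∏ j, (if j = i then A' (σ j) (τ j) else A (σ j) (τ j)))]
    refine Finset.sum_congr rfl fun ρ _ => ?_
    have hsq : (((Equiv.Perm.sign τ : ℤ) : ℝ)) * (((Equiv.Perm.sign τ : ℤ) : ℝ)) = 1 := by
      rcases Int.units_eq_one_or (Equiv.Perm.sign τ) with h | h <;> simp [h]
    have hsgn : ((Equiv.Perm.sign (Equiv.mulRight τ ρ) : ℤ) : ℝ) * ((Equiv.Perm.sign τ : ℤ) : ℝ)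
        = ((Equiv.Perm.sign ρ : ℤ) : ℝ) := by
      simp only [Equiv.coe_mulRight, Equiv.Perm.sign_mul, Units.val_mul, Int.cast_mul]
      rw [mul_assoc, hsq, mul_one]
    have hprod : (∏ j, (if j = i then A' ((Equiv.mulRight τ ρ) j) (τ j)
          else A ((Equiv.mulRight τ ρ) j) (τ j)))
        = ∏ q, (if q = τ i then A' (ρ q) q else A (ρ q) q) := by
      rw [← Equiv.prod_comp τ (fun q => if q = τ i then A' (ρ q) q else A (ρ q) q)]
      refine Finset.prod_congr rfl fun j _ => ?_
      simp only [Equiv.coe_mulRight, Equiv.Perm.mul_apply, EmbeddingLike.apply_eq_iff_eq]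
    rw [hprod, hsgn]
  calc (∑ i : Fin n, ∑ σ : Equiv.Perm (Fin n), ∑ τ : Equiv.Perm (Fin n),
      ((Equiv.Perm.sign σ : ℤ) : ℝ) * ((Equiv.Perm.sign τ : ℤ) : ℝ) *
        ∏ j, (if j = i then A' (σ j) (τ j) else A (σ j) (τ j)))
      = ∑ i : Fin n, ∑ τ : Equiv.Perm (Fin n), D (τ i) := by
        refine Finset.sum_congr rfl fun i _ => ?_
        rw [Finset.sum_comm]
        exact Finset.sum_congr rfl fun τ _ => step1 i τ
    _ = ∑ τ : Equiv.Perm (Fin n), ∑ i : Fin n, D (τ i) := Finset.sum_comm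
    _ = ∑ τ : Equiv.Perm (Fin n), ∑ k : Fin n, D k := by
        exact Finset.sum_congr rfl fun τ _ => Equiv.sum_comp τ D
    _ = (n.factorial : ℝ) * ∑ k : Fin n, D k := by
        rw [Finset.sum_const, Finset.card_univ, Fintype.card_perm, Fintype.card_fin,
          nsmul_eq_mul]
lemma null_diag {n : ℕ} :
    volume {x : Fin n → ℝ | ∃ i j, i ≠ j ∧ x i = x j} = 0 := by
  have hsub : {x : Fin n → ℝ | ∃ i j, i ≠ j ∧ x i = x j} ⊆
      ⋃ p : Fin n × Fin n, {x : Fin n → ℝ | p.1 ≠ p.2 ∧ x p.1 = x p.2} := by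
    rintro x ⟨i, j, hij, hx⟩
    exact Set.mem_iUnion.2 ⟨(i, j), hij, hx⟩
  refine measure_mono_null hsub (measure_iUnion_null fun p => ?_)
  rcases eq_or_ne p.1 p.2 with h | h
  · simp [h]
  · have hset : {x : Fin n → ℝ | p.1 ≠ p.2 ∧ x p.1 = x p.2}
        = (LinearMap.ker ((LinearMap.proj p.1 : (Fin n → ℝ) →ₗ[ℝ] ℝ) - LinearMap.proj p.2) :
            Submodule ℝ (Fin n → ℝ)) := by
      ext x
      simp [LinearMap.mem_ker, sub_eq_zero, h, eq_comm]
    rw [hset]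
    refine Measure.addHaar_submodule volume _ ?_
    intro htop
    have hmem : (Pi.single p.1 1 : Fin n → ℝ) ∈
        LinearMap.ker ((LinearMap.proj p.1 : (Fin n → ℝ) →ₗ[ℝ] ℝ) - LinearMap.proj p.2) := by
      rw [htop]; trivial
    simp only [LinearMap.mem_ker, LinearMap.sub_apply, LinearMap.proj_apply] at hmem
    rw [Pi.single_eq_same, Pi.single_eq_of_ne (Ne.symm h)] at hmem
    norm_num at hmem

lemma pi_restrict_eq {n : ℕ} (a b : ℝ) :
    (Measure.pi fun _ : Fin n => volume.restrict (Set.Icc a b))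
      = volume.restrict (Set.pi Set.univ fun _ : Fin n => Set.Icc a b) := by
  refine Measure.pi_eq fun s hs => ?_
  rw [Measure.restrict_apply (MeasurableSet.univ_pi hs), ← Set.pi_inter_distrib,
    volume_pi_pi]
  exact Finset.prod_congr rfl fun i _ =>
    (Measure.restrict_apply (hs i)).symm

lemma sym_reduce (n : ℕ) (a b : ℝ) (F : (Fin n → ℝ) → ℝ)
    (hsym : ∀ (σ : Equiv.Perm (Fin n)) (x : Fin n → ℝ), F (fun j => x (σ j)) = F x)
    (hInt : IntegrableOn F (Set.pi Set.univ fun _ : Fin n => Set.Icc a b)) :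
    ∫ x in Set.pi Set.univ (fun _ : Fin n => Set.Icc a b), F x
      = (n.factorial : ℝ) * ∫ x in {x : Fin n → ℝ |
          (∀ i j : Fin n, i ≤ j → x j ≤ x i) ∧ ∀ i, x i ∈ Set.Icc a b}, F x := by
  classical
  set Box : Set (Fin n → ℝ) := Set.pi Set.univ (fun _ : Fin n => Set.Icc a b) with hBox
  set S : Set (Fin n → ℝ) := {x : Fin n → ℝ |
      (∀ i j : Fin n, i ≤ j → x j ≤ x i) ∧ ∀ i, x i ∈ Set.Icc a b} with hS
  set T : Set (Fin n → ℝ) := {x : Fin n → ℝ |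
      (∀ i j : Fin n, i < j → x j < x i) ∧ ∀ i, x i ∈ Set.Icc a b} with hT
  set Dg : Set (Fin n → ℝ) := {x : Fin n → ℝ | ∃ i j, i ≠ j ∧ x i = x j} with hDg
  -- the measurable equivalences
  set e : Equiv.Perm (Fin n) → ((Fin n → ℝ) ≃ᵐ (Fin n → ℝ)) :=
    fun σ => MeasurableEquiv.piCongrLeft (fun _ : Fin n => ℝ) σ.symm with he_def
  have he : ∀ (σ : Equiv.Perm (Fin n)) (x : Fin n → ℝ) (i : Fin n),
      e σ x i = x (σ i) := by
    intro σ x i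
    have := MeasurableEquiv.piCongrLeft_apply_apply σ.symm
      (β := fun _ : Fin n => ℝ) x (σ i)
    simpa using this
  set Ts : Equiv.Perm (Fin n) → Set (Fin n → ℝ) := fun σ => (e σ) ⁻¹' T with hTs
  have hBoxmeas : MeasurableSet Box :=
    MeasurableSet.univ_pi fun _ : Fin n => measurableSet_Icc
  have hTmeas : MeasurableSet T := by
    have hTeq : T = (⋂ i, ⋂ j, ⋂ _ : i < j, {x : Fin n → ℝ | x j < x i}) ∩ Box := by
      ext x
      simp only [hT, hBox, Set.mem_inter_iff, Set.mem_iInter, Set.mem_setOf_eq,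
        Set.mem_univ_pi]
    rw [hTeq]
    refine MeasurableSet.inter ?_ hBoxmeas
    exact MeasurableSet.iInter fun i => MeasurableSet.iInter fun j =>
      MeasurableSet.iInter fun _ =>
        measurableSet_lt (measurable_pi_apply _) (measurable_pi_apply _)
  have hTsmeas : ∀ σ, MeasurableSet (Ts σ) := fun σ =>
    (e σ).measurable hTmeas
  have hmemTs : ∀ σ x, x ∈ Ts σ ↔
      ((∀ i j : Fin n, i < j → x (σ j) < x (σ i)) ∧ ∀ i, x i ∈ Set.Icc a b) := by
    intro σ x
    simp only [hTs, Set.mem_preimage, hT, Set.mem_setOf_eq, he]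
    constructor
    · rintro ⟨h1, h2⟩
      exact ⟨h1, fun i => by simpa using h2 (σ.symm i)⟩
    · rintro ⟨h1, h2⟩
      exact ⟨h1, fun i => h2 (σ i)⟩
  -- Ts σ ⊆ Box
  have hTsBox : ∀ σ, Ts σ ⊆ Box := by
    intro σ x hx
    rw [hmemTs] at hx
    exact fun i _ => hx.2 i
  -- pairwise disjoint
  have hdisj : Pairwise (Function.onFun Disjoint Ts) := by
    intro σ τ hne
    rw [Function.onFun, Set.disjoint_left]
    intro x hxσ hxτ
    rw [hmemTs] at hxσ hxτ
    have hf : StrictAnti (fun i => x (σ i)) := fun i j h => hxσ.1 i j h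
    have hg : StrictAnti (fun i => x (τ i)) := fun i j h => hxτ.1 i j h
    have hπ : StrictMono (fun i => σ.symm (τ i)) := by
      intro i j hij
      have : x (τ j) < x (τ i) := hg hij
      have h2 : x (σ (σ.symm (τ j))) < x (σ (σ.symm (τ i))) := by
        simpa using this
      exact hf.lt_iff_gt.mp h2
    haveI : WellFoundedLT (Fin n) := Finite.to_wellFoundedLT
    have hrng : (fun i => σ.symm (τ i)) = (id : Fin n → Fin n) := by
      refine (hπ.range_inj strictMono_id).mp ?_
      rw [Set.range_id]
      exact Set.range_eq_univ.mpr fun k => ⟨τ.symm (σ k), by simp⟩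
    refine hne (Equiv.ext fun i => ?_)
    have h5 := congrFun hrng i
    simp only [id_eq] at h5
    exact ((Equiv.symm_apply_eq σ).mp h5).symm
  -- covering up to null set
  have hcover : Box \ (⋃ σ, Ts σ) ⊆ Dg := by
    intro x ⟨hxB, hxU⟩
    by_contra hxD
    apply hxU
    have hinj : Function.Injective x := by
      intro i j hij
      by_contra hne
      exact hxD ⟨i, j, hne, hij⟩
    set s := Tuple.sort x with hs
    have hmono := Tuple.monotone_sort x
    set σ : Equiv.Perm (Fin n) := Fin.revPerm.trans s with hσ
    refine Set.mem_iUnion.2 ⟨σ, ?_⟩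
    rw [hmemTs]
    refine ⟨fun i j hij => ?_, fun i => hxB i trivial⟩
    have h1 : Fin.rev j < Fin.rev i := by rwa [Fin.rev_lt_rev]
    have h2 : x (s (Fin.rev j)) ≤ x (s (Fin.rev i)) := hmono h1.le
    have h3 : s (Fin.rev j) ≠ s (Fin.rev i) := by
      simp only [ne_eq, EmbeddingLike.apply_eq_iff_eq]
      exact fun h => lt_irrefl _ (h ▸ h1)
    have : x (s (Fin.rev j)) ≠ x (s (Fin.rev i)) := fun h => h3 (hinj h)
    have : x (s (Fin.rev j)) < x (s (Fin.rev i)) := lt_of_le_of_ne h2 this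
    simpa [hσ] using this
  have hBoxae : Box =ᵐ[volume] ⋃ σ, Ts σ := by
    rw [MeasureTheory.ae_eq_set]
    constructor
    · exact measure_mono_null hcover null_diag
    · have : (⋃ σ, Ts σ) \ Box = ∅ := by
        rw [Set.diff_eq_empty]
        exact Set.iUnion_subset hTsBox
      simp [this]
  have hSae : S =ᵐ[volume] T := by
    rw [MeasureTheory.ae_eq_set]
    constructor
    · refine measure_mono_null (fun x hx => ?_) null_diag
      obtain ⟨⟨hx1, hx2⟩, hxT⟩ := hx
      have hns : ¬ (∀ i j : Fin n, i < j → x j < x i) := fun hstrict =>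
        hxT ⟨hstrict, hx2⟩
      push_neg at hns
      obtain ⟨i, j, hij, hle⟩ := hns
      exact ⟨i, j, hij.ne, le_antisymm hle (hx1 i j hij.le)⟩
    · have : T \ S = ∅ := by
        rw [Set.diff_eq_empty]
        rintro x ⟨h1, h2⟩
        refine ⟨fun i j hij => ?_, h2⟩
        rcases eq_or_lt_of_le hij with h | h
        · subst h; exact le_refl _
        · exact (h1 i j h).le
      simp [this]
  -- each permuted piece has the same integral
  have hpiece : ∀ σ, ∫ x in Ts σ, F x = ∫ x in T, F x := by
    intro σ
    have hmp : MeasurePreserving (e σ) volume volume :=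
      volume_measurePreserving_piCongrLeft (fun _ : Fin n => ℝ) σ.symm
    have := hmp.setIntegral_preimage_emb (e σ).measurableEmbedding F T
    rw [← this]
    refine setIntegral_congr_fun (hTsmeas σ) fun x _ => ?_
    have : e σ x = fun j => x (σ j) := funext fun j => he σ x j
    rw [this, hsym σ x]
  calc ∫ x in Box, F x = ∫ x in ⋃ σ, Ts σ, F x := setIntegral_congr_set hBoxae
    _ = ∑ σ : Equiv.Perm (Fin n), ∫ x in Ts σ, F x :=
        integral_iUnion_fintype hTsmeas hdisj fun σ => hInt.mono_set (hTsBox σ)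
    _ = ∑ _σ : Equiv.Perm (Fin n), ∫ x in T, F x :=
        Finset.sum_congr rfl fun σ _ => hpiece σ
    _ = (n.factorial : ℝ) * ∫ x in T, F x := by
        rw [Finset.sum_const, Finset.card_univ, Fintype.card_perm, Fintype.card_fin,
          nsmul_eq_mul]
    _ = (n.factorial : ℝ) * ∫ x in S, F x := by rw [setIntegral_congr_set hSae.symm]
/-- Special case (p = n, no constant border) of the determinant multiple-integral
identity (Theorem 2 of Chiani–Win–Shin):
`∫_{b ≥ x₁ ≥ … ≥ x_n ≥ a} det[Φᵢ(x_j)] det[Ψᵢ(x_j)] ∏_m ξ(x_m) · Σ_i ξ̃(x_i) dx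
 = Σ_{k=1}^n det[ ∫_a^b Φᵢ(x) Ψⱼ(x) ξ(x) (ξ̃(x) if j = k else 1) dx ]`. -/
theorem stmt_9 (n : ℕ) (a b : ℝ) (hab : a ≤ b)
    (Φ Ψ : Fin n → ℝ → ℝ) (ξ ξt : ℝ → ℝ)
    (hΦ : ∀ i, Measurable (Φ i)) (hΨ : ∀ i, Measurable (Ψ i))
    (hξ : Measurable ξ) (hξt : Measurable ξt)
    (hint : ∀ i j, IntegrableOn (fun t => Φ i t * Ψ j t * ξ t) (Set.Icc a b))
    (hint' : ∀ i j,
      IntegrableOn (fun t => Φ i t * Ψ j t * ξ t * ξt t) (Set.Icc a b)) :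
    (∫ x in {x : Fin n → ℝ |
        (∀ i j : Fin n, i ≤ j → x j ≤ x i) ∧ ∀ i, x i ∈ Set.Icc a b},
      Matrix.det (Matrix.of fun i j : Fin n => Φ i (x j)) *
        Matrix.det (Matrix.of fun i j : Fin n => Ψ i (x j)) *
        (∏ m, ξ (x m)) * (∑ i, ξt (x i))) =
      ∑ k : Fin n,
        Matrix.det (Matrix.of fun i j : Fin n =>
          ∫ t in Set.Icc a b,
            Φ i t * Ψ j t * ξ t * (if j = k then ξt t else 1)) := by
  classical
  haveI : IsFiniteMeasure (volume.restrict (Set.Icc a b)) :=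
    ⟨by rw [Measure.restrict_apply_univ]; exact measure_Icc_lt_top⟩
  set F : (Fin n → ℝ) → ℝ := fun x =>
    Matrix.det (Matrix.of fun i j : Fin n => Φ i (x j)) *
      Matrix.det (Matrix.of fun i j : Fin n => Ψ i (x j)) *
      (∏ m, ξ (x m)) * (∑ i, ξt (x i)) with hF
  set g : Fin n → Equiv.Perm (Fin n) → Equiv.Perm (Fin n) → Fin n → ℝ → ℝ :=
    fun i σ τ j t => Φ (σ j) t * Ψ (τ j) t * ξ t * (if j = i then ξt t else 1) with hg
  have hgint : ∀ i σ τ j, Integrable (g i σ τ j) (volume.restrict (Set.Icc a b)) := by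
    intro i σ τ j
    by_cases h : j = i
    · simpa [hg, h, IntegrableOn] using hint' (σ j) (τ j)
    · simpa [hg, h, IntegrableOn] using hint (σ j) (τ j)
  set A : Fin n → Fin n → ℝ :=
    fun p q => ∫ t, Φ p t * Ψ q t * ξ t ∂(volume.restrict (Set.Icc a b)) with hA
  set A' : Fin n → Fin n → ℝ :=
    fun p q => ∫ t, Φ p t * Ψ q t * ξ t * ξt t ∂(volume.restrict (Set.Icc a b)) with hA'
  -- pointwise expansion of F
  have hFexp : F = fun x : Fin n → ℝ =>
      ∑ i : Fin n, ∑ σ : Equiv.Perm (Fin n), ∑ τ : Equiv.Perm (Fin n),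
        ((Equiv.Perm.sign σ : ℤ) : ℝ) * ((Equiv.Perm.sign τ : ℤ) : ℝ) *
          ∏ j, g i σ τ j (x j) := by
    funext x
    rw [hF]
    simp only [Matrix.det_apply', Matrix.of_apply]
    rw [Finset.mul_sum]
    refine Finset.sum_congr rfl fun i _ => ?_
    simp only [Finset.sum_mul, Finset.mul_sum]
    rw [Finset.sum_comm]
    refine Finset.sum_congr rfl fun σ _ => Finset.sum_congr rfl fun τ _ => ?_
    have hprodg : ∏ j, g i σ τ j (x j)
        = (∏ j, Φ (σ j) (x j)) * (∏ j, Ψ (τ j) (x j)) * (∏ j, ξ (x j)) * ξt (x i) := by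
      rw [hg]
      rw [Finset.prod_mul_distrib, Finset.prod_mul_distrib, Finset.prod_mul_distrib]
      congr 1
      simp
    rw [hprodg]
    ring
  -- integrability over the box
  have hpi := pi_restrict_eq (n := n) a b
  have hIntBox : IntegrableOn F (Set.pi Set.univ fun _ : Fin n => Set.Icc a b) volume := by
    have : Integrable F (Measure.pi fun _ : Fin n => volume.restrict (Set.Icc a b)) := by
      rw [hFexp]
      refine integrable_finset_sum _ fun i _ => integrable_finset_sum _ fun σ _ =>
        integrable_finset_sum _ fun τ _ => ?_
      exact ((pi_prod_aux _ (g i σ τ) (hgint i σ τ)).1).const_mul _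
    rwa [hpi] at this
  -- value of the box integral
  have hgval : ∀ i σ τ j, (∫ t, g i σ τ j t ∂(volume.restrict (Set.Icc a b)))
      = if j = i then A' (σ j) (τ j) else A (σ j) (τ j) := by
    intro i σ τ j
    by_cases h : j = i <;> simp [hg, h, hA, hA']
  have hbox : (∫ x in (Set.pi Set.univ fun _ : Fin n => Set.Icc a b), F x)
      = ∑ i : Fin n, ∑ σ : Equiv.Perm (Fin n), ∑ τ : Equiv.Perm (Fin n),
          ((Equiv.Perm.sign σ : ℤ) : ℝ) * ((Equiv.Perm.sign τ : ℤ) : ℝ) *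
            ∏ j, (if j = i then A' (σ j) (τ j) else A (σ j) (τ j)) := by
    rw [← hpi, hFexp]
    rw [integral_finset_sum _ (fun i _ => integrable_finset_sum _ fun σ _ =>
      integrable_finset_sum _ fun τ _ =>
        ((pi_prod_aux _ (g i σ τ) (hgint i σ τ)).1).const_mul _)]
    refine Finset.sum_congr rfl fun i _ => ?_
    rw [integral_finset_sum _ (fun σ _ => integrable_finset_sum _ fun τ _ =>
      ((pi_prod_aux _ (g i σ τ) (hgint i σ τ)).1).const_mul _)]
    refine Finset.sum_congr rfl fun σ _ => ?_
    rw [integral_finset_sum _ (fun τ _ =>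
      ((pi_prod_aux _ (g i σ τ) (hgint i σ τ)).1).const_mul _)]
    refine Finset.sum_congr rfl fun τ _ => ?_
    rw [MeasureTheory.integral_const_mul, (pi_prod_aux _ (g i σ τ) (hgint i σ τ)).2]
    congr 1
    exact Finset.prod_congr rfl fun j _ => hgval i σ τ j
  -- symmetry of F
  have hsym : ∀ (σ : Equiv.Perm (Fin n)) (x : Fin n → ℝ), F (fun j => x (σ j)) = F x := by
    intro σ x
    rw [hF]
    have h1 : Matrix.det (Matrix.of fun i j : Fin n => Φ i (x (σ j)))
        = (Equiv.Perm.sign σ : ℝ) * Matrix.det (Matrix.of fun i j : Fin n => Φ i (x j)) := by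
      simpa [Matrix.submatrix] using Matrix.det_permute' σ (Matrix.of fun i j : Fin n => Φ i (x j))
    have h2 : Matrix.det (Matrix.of fun i j : Fin n => Ψ i (x (σ j)))
        = (Equiv.Perm.sign σ : ℝ) * Matrix.det (Matrix.of fun i j : Fin n => Ψ i (x j)) := by
      simpa [Matrix.submatrix] using Matrix.det_permute' σ (Matrix.of fun i j : Fin n => Ψ i (x j))
    have h3 : (∏ m, ξ (x (σ m))) = ∏ m, ξ (x m) := Equiv.prod_comp σ fun m => ξ (x m)
    have h4 : (∑ i, ξt (x (σ i))) = ∑ i, ξt (x i) := Equiv.sum_comp σ fun i => ξt (x i)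
    simp only []
    rw [h1, h2, h3, h4]
    rcases Int.units_eq_one_or (Equiv.Perm.sign σ) with h | h <;>
      rw [h] <;> push_cast <;> ring
  have hred := sym_reduce n a b F hsym hIntBox
  -- determinant of the right-hand matrices
  have hdet : ∀ k : Fin n, Matrix.det (Matrix.of fun i j : Fin n =>
        ∫ t in Set.Icc a b, Φ i t * Ψ j t * ξ t * (if j = k then ξt t else 1))
      = ∑ ρ : Equiv.Perm (Fin n), ((Equiv.Perm.sign ρ : ℤ) : ℝ) *
          ∏ q, (if q = k then A' (ρ q) q else A (ρ q) q) := by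
    intro k
    rw [Matrix.det_apply']
    refine Finset.sum_congr rfl fun ρ _ => ?_
    congr 1
    refine Finset.prod_congr rfl fun q _ => ?_
    by_cases h : q = k <;> simp [Matrix.of_apply, h, hA, hA']
  have hfinal : (n.factorial : ℝ) * (∫ x in {x : Fin n → ℝ |
        (∀ i j : Fin n, i ≤ j → x j ≤ x i) ∧ ∀ i, x i ∈ Set.Icc a b}, F x)
      = (n.factorial : ℝ) * ∑ k : Fin n,
          Matrix.det (Matrix.of fun i j : Fin n =>
            ∫ t in Set.Icc a b,
              Φ i t * Ψ j t * ξ t * (if j = k then ξt t else 1)) := by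
    rw [← hred, hbox, alg_key A A']
    congr 1
    exact (Finset.sum_congr rfl fun k _ => (hdet k).symm)
  exact mul_left_cancel₀ (by exact_mod_cast n.factorial_ne_zero) hfinal
end

section
/- Andréief's identity (used implicitly): for functions Φ_i, Ψ_j : [a,b] → ℝ, i, j = 1,…,n, with all products integrable, ∫_{b ≥ x_1 ≥ … ≥ x_n ≥ a} det[Φ_i(x_j)] det[Ψ_i(x_j)] dx = det[ ∫_a^b Φ_i(x) Ψ_j(x) dx ]_{i,j=1}^n. -/
open MeasureTheory Matrix Finset

set_option linter.deprecated false

open MeasureTheory Matrix Finset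

namespace AndreiefAux

variable {n : ℕ}

/-- The hyperplane where two distinct coordinates agree is null. -/
lemma null_eq_coord {i j : Fin n} (hij : i ≠ j) :
    volume {x : Fin n → ℝ | x i = x j} = 0 := by
  have hset : {x : Fin n → ℝ | x i = x j} =
      (LinearMap.ker ((LinearMap.proj i : (Fin n → ℝ) →ₗ[ℝ] ℝ) - LinearMap.proj j) : Set _) := by
    ext x
    simp [LinearMap.mem_ker, sub_eq_zero]
  rw [hset]
  refine Measure.addHaar_submodule _ _ ?_
  intro htop
  rw [LinearMap.ker_eq_top] at htop
  have h1 : ((LinearMap.proj i : (Fin n → ℝ) →ₗ[ℝ] ℝ) - (LinearMap.proj j : (Fin n → ℝ) →ₗ[ℝ] ℝ)) (Pi.single i 1) = 1 := by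
    simp [LinearMap.sub_apply, Pi.single_eq_same, Pi.single_eq_of_ne (Ne.symm hij)]
  rw [htop] at h1
  simp at h1

/-- Simplex associated to a permutation: coordinates strictly decreasing along `τ`. -/
def Dset (τ : Equiv.Perm (Fin n)) : Set (Fin n → ℝ) :=
  {x | ∀ i j : Fin n, i < j → x (τ j) < x (τ i)}

lemma measurable_Dset (τ : Equiv.Perm (Fin n)) : MeasurableSet (Dset τ) := by
  have : Dset τ = ⋂ (i : Fin n) (j : Fin n) (_ : i < j),
      {x : Fin n → ℝ | x (τ j) < x (τ i)} := by
    ext x; simp [Dset]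
  rw [this]
  exact MeasurableSet.iInter fun i => MeasurableSet.iInter fun j => MeasurableSet.iInter fun _ =>
    measurableSet_lt (measurable_pi_apply _) (measurable_pi_apply _)

lemma disjoint_Dset {τ τ' : Equiv.Perm (Fin n)} (h : τ ≠ τ') :
    Disjoint (Dset τ) (Dset τ') := by
  rw [Set.disjoint_left]
  intro x hx hx'
  apply h
  have hanti : StrictAnti (fun i => x (τ i)) := fun i j hij => hx i j hij
  have hmono : StrictMono (fun i => τ.symm (τ' i)) := by
    intro i j hij
    have h1 : x (τ (τ.symm (τ' j))) < x (τ (τ.symm (τ' i))) := by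
      simpa using hx' i j hij
    by_contra hle
    push_neg at hle
    rcases lt_or_eq_of_le hle with hlt | heq
    · exact absurd (hanti hlt) (not_lt.2 h1.le)
    · rw [heq] at h1; exact lt_irrefl _ h1
  have hEq : (fun i => τ.symm (τ' i)) = (id : Fin n → Fin n) := by
    refine (StrictMono.range_inj hmono (strictMono_id (α := Fin n))).1 ?_
    rw [Set.range_id, Set.range_eq_univ]
    exact (τ'.trans τ.symm).surjective
  refine Equiv.ext fun i => ?_
  have h2 := congrFun hEq i
  simp only [id_eq] at h2
  have h3 := congrArg τ h2
  simpa using h3.symm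

lemma exists_mem_Dset (x : Fin n → ℝ) (hx : Function.Injective x) :
    ∃ τ : Equiv.Perm (Fin n), x ∈ Dset τ := by
  refine ⟨(Fin.revPerm : Equiv.Perm (Fin n)).trans (Tuple.sort x), ?_⟩
  intro i j hij
  have hrev : j.rev < i.rev := by
    simpa using Fin.rev_lt_rev.2 hij
  have hmono := Tuple.monotone_sort x hrev.le
  simp only [Function.comp_apply] at hmono
  have hne : x ((Tuple.sort x) j.rev) ≠ x ((Tuple.sort x) i.rev) := by
    intro hEq
    have := hx hEq
    have := (Tuple.sort x).injective this
    exact absurd this (by simpa using hrev.ne)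
  simpa [Equiv.trans_apply] using lt_of_le_of_ne hmono hne

lemma piCongrLeft_apply' (τ : Equiv.Perm (Fin n)) (x : Fin n → ℝ) (i : Fin n) :
    (MeasurableEquiv.piCongrLeft (fun _ : Fin n => ℝ) τ) x i = x (τ.symm i) := by
  rw [MeasurableEquiv.coe_piCongrLeft]
  conv_lhs => rw [← Equiv.apply_symm_apply τ i, Equiv.piCongrLeft_apply_apply]

end AndreiefAux

open AndreiefAux

/-- Andréief's identity: for functions `Φᵢ, Ψⱼ : [a,b] → ℝ` with all products
integrable, the integral of the product of the two `n×n` alternant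
determinants `det[Φᵢ(x_j)]·det[Ψᵢ(x_j)]` over the ordered simplex
`{b ≥ x₁ ≥ … ≥ x_n ≥ a}` equals `det[∫_a^b Φᵢ(x)Ψⱼ(x) dx]`. -/
theorem stmt_10 (n : ℕ) (a b : ℝ) (hab : a ≤ b)
    (Φ Ψ : Fin n → ℝ → ℝ)
    (hΦ : ∀ i, Measurable (Φ i))
    (hΨ : ∀ i, Measurable (Ψ i))
    (hint : ∀ i j, IntegrableOn (fun t => Φ i t * Ψ j t) (Set.Icc a b)) :
    (∫ x in {x : Fin n → ℝ |
        (∀ i j : Fin n, i ≤ j → x j ≤ x i) ∧ ∀ i, x i ∈ Set.Icc a b},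
      Matrix.det (Matrix.of fun i j : Fin n => Φ i (x j)) *
        Matrix.det (Matrix.of fun i j : Fin n => Ψ i (x j))) =
      Matrix.det (Matrix.of fun i j : Fin n =>
        ∫ t in Set.Icc a b, Φ i t * Ψ j t) := by
  classical
  set F : Fin n → ℝ → ℝ := fun i => (Set.Icc a b).indicator (Φ i) with hF
  set G : Fin n → ℝ → ℝ := fun i => (Set.Icc a b).indicator (Ψ i) with hG
  have hFG : ∀ (i j : Fin n) (t : ℝ),
      F i t * G j t = (Set.Icc a b).indicator (fun t => Φ i t * Ψ j t) t := by
    intro i j t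
    by_cases h : t ∈ Set.Icc a b <;>
      simp [hF, hG, Set.indicator_of_mem, Set.indicator_of_notMem, h]
  have hFGint : ∀ i j : Fin n, Integrable (fun t => F i t * G j t) := by
    intro i j
    rw [funext (hFG i j), integrable_indicator_iff measurableSet_Icc]
    exact hint i j
  set H : (Fin n → ℝ) → ℝ :=
    fun x => Matrix.det (Matrix.of fun i j : Fin n => F i (x j)) * ∏ j, G j (x j) with hH
  have hpt : ∀ x : Fin n → ℝ,
      ∑ σ : Equiv.Perm (Fin n), ((Equiv.Perm.sign σ : ℤ) : ℝ) *
        ∏ i, (F (σ i) (x i) * G i (x i)) = H x := by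
    intro x
    show _ = (Matrix.of fun i j : Fin n => F i (x j)).det * ∏ j, G j (x j)
    rw [Matrix.det_apply', Finset.sum_mul]
    refine Finset.sum_congr rfl fun σ _ => ?_
    rw [Finset.prod_mul_distrib, mul_assoc]
    rfl
  have hfσ : ∀ σ : Equiv.Perm (Fin n),
      Integrable (fun x : Fin n → ℝ => ∏ i, (F (σ i) (x i) * G i (x i))) := fun σ =>
    Integrable.fintype_prod (f := fun i t => F (σ i) t * G i t) (fun i => hFGint (σ i) i)
  have hHint : Integrable H := by
    have h0 : H = fun x => ∑ σ : Equiv.Perm (Fin n), ((Equiv.Perm.sign σ : ℤ) : ℝ) *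
        ∏ i, (F (σ i) (x i) * G i (x i)) := funext fun x => (hpt x).symm
    rw [h0]
    exact integrable_finset_sum _ fun σ _ => ((hfσ σ).const_mul _)
  -- RHS equals the integral of `H` over the whole space
  have hRHS : Matrix.det (Matrix.of fun i j : Fin n => ∫ t in Set.Icc a b, Φ i t * Ψ j t)
      = ∫ x : Fin n → ℝ, H x := by
    have hM : (Matrix.of fun i j : Fin n => ∫ t in Set.Icc a b, Φ i t * Ψ j t)
        = Matrix.of fun i j : Fin n => ∫ t, F i t * G j t := by
      ext i j
      simp only [Matrix.of_apply]
      rw [funext (hFG i j), integral_indicator measurableSet_Icc]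
    rw [hM, Matrix.det_apply']
    have hfub : ∀ σ : Equiv.Perm (Fin n),
        (∏ i, (Matrix.of fun i j : Fin n => ∫ t, F i t * G j t) (σ i) i)
          = ∫ x : Fin n → ℝ, ∏ i, (F (σ i) (x i) * G i (x i)) := by
      intro σ
      rw [MeasureTheory.volume_pi]
      simpa using
        (MeasureTheory.integral_fintype_prod_eq_prod (ι := Fin n)
          (fun i (t : ℝ) => F (σ i) t * G i t)).symm
    calc (∑ σ : Equiv.Perm (Fin n), ((Equiv.Perm.sign σ : ℤ) : ℝ) *
          ∏ i, (Matrix.of fun i j : Fin n => ∫ t, F i t * G j t) (σ i) i)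
        = ∑ σ : Equiv.Perm (Fin n), ∫ x : Fin n → ℝ, ((Equiv.Perm.sign σ : ℤ) : ℝ) *
            ∏ i, (F (σ i) (x i) * G i (x i)) := by
          refine Finset.sum_congr rfl fun σ _ => ?_
          rw [hfub σ]
          exact (integral_const_mul _ _).symm
      _ = ∫ x : Fin n → ℝ, ∑ σ : Equiv.Perm (Fin n), ((Equiv.Perm.sign σ : ℤ) : ℝ) *
            ∏ i, (F (σ i) (x i) * G i (x i)) :=
          (integral_finset_sum _ fun σ _ => ((hfσ σ).const_mul _)).symm
      _ = ∫ x : Fin n → ℝ, H x := integral_congr_ae (.of_forall hpt)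
  -- splitting the integral over the simplices
  have hnull : volume (⋃ p : Fin n × Fin n,
      {x : Fin n → ℝ | p.1 ≠ p.2 ∧ x p.1 = x p.2}) = 0 := by
    refine measure_iUnion_null fun p => ?_
    by_cases hp : p.1 = p.2
    · have hs : {x : Fin n → ℝ | p.1 ≠ p.2 ∧ x p.1 = x p.2} = ∅ := by ext x; simp [hp]
      simp [hs]
    · exact measure_mono_null (fun x hx => hx.2) (null_eq_coord hp)
  have hU : (Set.univ : Set (Fin n → ℝ)) =ᵐ[volume] ⋃ τ : Equiv.Perm (Fin n), Dset τ := by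
    refine (MeasureTheory.ae_eq_univ.2 (measure_mono_null ?_ hnull)).symm
    intro x hx
    simp only [Set.mem_compl_iff, Set.mem_iUnion] at hx
    by_contra hc
    simp only [Set.mem_iUnion, Set.mem_setOf_eq, not_exists] at hc
    refine hx ?_
    obtain ⟨τ, hτ⟩ := exists_mem_Dset x (fun i j hxij => by
      by_contra hne
      exact hc (i, j) ⟨hne, hxij⟩)
    exact ⟨τ, hτ⟩
  have hsplit : ∫ x, H x = ∑ τ : Equiv.Perm (Fin n), ∫ x in Dset τ, H x := by
    rw [← setIntegral_univ, setIntegral_congr_set hU]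
    have h1 : (⋃ τ : Equiv.Perm (Fin n), Dset τ)
        = ⋃ τ ∈ (Finset.univ : Finset (Equiv.Perm (Fin n))), Dset τ := by simp
    rw [h1]
    exact integral_biUnion_finset Finset.univ (fun τ _ => measurable_Dset τ)
      (fun τ _ τ' _ h => disjoint_Dset h) (fun τ _ => hHint.integrableOn)
  -- transporting each simplex to the standard one
  have hB : ∀ τ : Equiv.Perm (Fin n),
      ∫ x in Dset τ.symm, H x = ∫ y in Dset (1 : Equiv.Perm (Fin n)), H (fun i => y (τ i)) := by
    intro τ
    have hmp := MeasureTheory.volume_measurePreserving_piCongrLeft (fun _ : Fin n => ℝ) τ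
    have hemb := (MeasurableEquiv.piCongrLeft (fun _ : Fin n => ℝ) τ).measurableEmbedding
    have hpre : (MeasurableEquiv.piCongrLeft (fun _ : Fin n => ℝ) τ) ⁻¹'
        (Dset (1 : Equiv.Perm (Fin n))) = Dset τ.symm := by
      ext x
      simp only [Set.mem_preimage, Dset, Set.mem_setOf_eq, Equiv.Perm.coe_one, id_eq,
        piCongrLeft_apply']
    rw [← MeasurePreserving.setIntegral_preimage_emb hmp hemb
      (fun y => H (fun i => y (τ i))) _, hpre]
    refine setIntegral_congr_fun (measurable_Dset _) fun x _ => ?_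
    have hfun : (fun i => (MeasurableEquiv.piCongrLeft (fun _ : Fin n => ℝ) τ) x (τ i)) = x := by
      funext i
      rw [piCongrLeft_apply']
      simp
    rw [hfun]
  have hcomp : ∀ τ : Equiv.Perm (Fin n),
      Integrable (fun y : Fin n → ℝ => H (fun i => y (τ i))) := by
    intro τ
    have hmp := MeasureTheory.volume_measurePreserving_piCongrLeft (fun _ : Fin n => ℝ) τ.symm
    have hemb := (MeasurableEquiv.piCongrLeft (fun _ : Fin n => ℝ) τ.symm).measurableEmbedding
    have h1 := (hmp.integrable_comp_emb hemb).2 hHint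
    have h2 : (H ∘ (MeasurableEquiv.piCongrLeft (fun _ : Fin n => ℝ) τ.symm))
        = fun y : Fin n → ℝ => H (fun i => y (τ i)) := by
      funext y
      simp only [Function.comp_apply]
      congr 1
      funext i
      rw [piCongrLeft_apply']
      simp
    rwa [h2] at h1
  have hsum2 : ∑ τ : Equiv.Perm (Fin n), ∫ x in Dset τ, H x
      = ∑ τ : Equiv.Perm (Fin n), ∫ y in Dset (1 : Equiv.Perm (Fin n)), H (fun i => y (τ i)) := by
    rw [← Equiv.sum_comp (Equiv.inv (Equiv.Perm (Fin n)))
      (fun τ => ∫ x in Dset τ, H x)]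
    exact Finset.sum_congr rfl fun τ _ => hB τ
  have hswap2 : ∑ τ : Equiv.Perm (Fin n),
        ∫ y in Dset (1 : Equiv.Perm (Fin n)), H (fun i => y (τ i))
      = ∫ y in Dset (1 : Equiv.Perm (Fin n)), ∑ τ : Equiv.Perm (Fin n), H (fun i => y (τ i)) :=
    (integral_finset_sum _ fun τ _ => (hcomp τ).integrableOn).symm
  -- pointwise identity on the simplex
  have hC : ∀ y : Fin n → ℝ, ∑ τ : Equiv.Perm (Fin n), H (fun i => y (τ i))
      = Matrix.det (Matrix.of fun i j : Fin n => F i (y j)) *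
        Matrix.det (Matrix.of fun i j : Fin n => G i (y j)) := by
    intro y
    have h1 : ∀ τ : Equiv.Perm (Fin n), H (fun i => y (τ i))
        = Matrix.det (Matrix.of fun i j : Fin n => F i (y j)) *
          (((Equiv.Perm.sign τ : ℤ) : ℝ) * ∏ j, G j (y (τ j))) := by
      intro τ
      show (Matrix.of fun i j : Fin n => F i (y (τ j))).det * ∏ j, G j (y (τ j)) = _
      have h2 : (Matrix.of fun i j : Fin n => F i (y (τ j)))
          = (Matrix.of fun i j : Fin n => F i (y j)).submatrix id τ := rfl
      rw [h2, Matrix.det_permute']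
      ring
    calc (∑ τ : Equiv.Perm (Fin n), H (fun i => y (τ i)))
        = Matrix.det (Matrix.of fun i j : Fin n => F i (y j)) *
            ∑ τ : Equiv.Perm (Fin n), ((Equiv.Perm.sign τ : ℤ) : ℝ) * ∏ j, G j (y (τ j)) := by
          rw [Finset.mul_sum]
          exact Finset.sum_congr rfl fun τ _ => h1 τ
      _ = _ := by
          congr 1
          rw [← Matrix.det_transpose (Matrix.of fun i j : Fin n => G i (y j)),
            Matrix.det_apply']
          exact Finset.sum_congr rfl fun τ _ => by congr 1
  -- comparison with the genuine integrand
  have hD : ∀ y : Fin n → ℝ,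
      Matrix.det (Matrix.of fun i j : Fin n => F i (y j)) *
        Matrix.det (Matrix.of fun i j : Fin n => G i (y j))
      = Set.indicator {x : Fin n → ℝ | ∀ i, x i ∈ Set.Icc a b}
          (fun x => Matrix.det (Matrix.of fun i j : Fin n => Φ i (x j)) *
            Matrix.det (Matrix.of fun i j : Fin n => Ψ i (x j))) y := by
    intro y
    by_cases hy : y ∈ {x : Fin n → ℝ | ∀ i, x i ∈ Set.Icc a b}
    · rw [Set.indicator_of_mem hy]
      have hFy : (Matrix.of fun i j : Fin n => F i (y j))
          = Matrix.of fun i j : Fin n => Φ i (y j) := by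
        ext i j; simp only [Matrix.of_apply, hF]; exact Set.indicator_of_mem (hy j) _
      have hGy : (Matrix.of fun i j : Fin n => G i (y j))
          = Matrix.of fun i j : Fin n => Ψ i (y j) := by
        ext i j; simp only [Matrix.of_apply, hG]; exact Set.indicator_of_mem (hy j) _
      rw [hFy, hGy]
    · rw [Set.indicator_of_notMem hy]
      have hy' : ¬ ∀ i, y i ∈ Set.Icc a b := hy
      push_neg at hy'
      obtain ⟨j, hj⟩ := hy'
      have h0 : Matrix.det (Matrix.of fun i j : Fin n => F i (y j)) = 0 :=
        Matrix.det_eq_zero_of_column_eq_zero j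
          (fun i => by simp only [Matrix.of_apply, hF]; exact Set.indicator_of_notMem hj _)
      rw [h0, zero_mul]
  have hcubeMeas : MeasurableSet {x : Fin n → ℝ | ∀ i, x i ∈ Set.Icc a b} := by
    have h1 : {x : Fin n → ℝ | ∀ i, x i ∈ Set.Icc a b}
        = Set.pi Set.univ (fun _ : Fin n => Set.Icc a b) := by
      ext x; simp [Set.mem_pi, Set.mem_Icc, Pi.le_def, forall_and]
    rw [h1]
    exact MeasurableSet.univ_pi fun i => measurableSet_Icc
  have hSae : ((Dset (1 : Equiv.Perm (Fin n)) ∩ {x : Fin n → ℝ | ∀ i, x i ∈ Set.Icc a b}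
        : Set (Fin n → ℝ)))
      =ᵐ[volume] {x : Fin n → ℝ |
        (∀ i j : Fin n, i ≤ j → x j ≤ x i) ∧ ∀ i, x i ∈ Set.Icc a b} := by
    rw [MeasureTheory.ae_eq_set]
    constructor
    · have hsub : (Dset (1 : Equiv.Perm (Fin n)) ∩ {x : Fin n → ℝ | ∀ i, x i ∈ Set.Icc a b})
          \ {x : Fin n → ℝ | (∀ i j : Fin n, i ≤ j → x j ≤ x i) ∧ ∀ i, x i ∈ Set.Icc a b}
          = ∅ := by
        rw [Set.diff_eq_empty]
        rintro x ⟨hx1, hx2⟩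
        refine ⟨fun i j hij => ?_, hx2⟩
        rcases eq_or_lt_of_le hij with h | h
        · rw [h]
        · exact (by simpa using hx1 i j h : x j < x i).le
      rw [hsub]
      exact measure_empty
    · refine measure_mono_null ?_ hnull
      rintro x ⟨⟨hord, hcube⟩, hnot⟩
      have hx1 : x ∉ Dset (1 : Equiv.Perm (Fin n)) := fun h => hnot ⟨h, hcube⟩
      simp only [Dset, Set.mem_setOf_eq, Equiv.Perm.coe_one, id_eq, not_forall] at hx1
      obtain ⟨i, j, hij, hle⟩ := hx1
      push_neg at hle
      refine Set.mem_iUnion.2 ⟨(i, j), ?_⟩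
      exact ⟨hij.ne, le_antisymm (hle) (hord i j hij.le)⟩
  -- putting everything together
  rw [hRHS, hsplit, hsum2, hswap2]
  refine Eq.symm ?_
  calc (∫ y in Dset (1 : Equiv.Perm (Fin n)),
          ∑ τ : Equiv.Perm (Fin n), H (fun i => y (τ i)))
      = ∫ y in Dset (1 : Equiv.Perm (Fin n)),
          Set.indicator {x : Fin n → ℝ | ∀ i, x i ∈ Set.Icc a b}
            (fun x => Matrix.det (Matrix.of fun i j : Fin n => Φ i (x j)) *
              Matrix.det (Matrix.of fun i j : Fin n => Ψ i (x j))) y :=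
        setIntegral_congr_fun (measurable_Dset _) fun y _ => (hC y).trans (hD y)
    _ = ∫ y in Dset (1 : Equiv.Perm (Fin n)) ∩ {x : Fin n → ℝ | ∀ i, x i ∈ Set.Icc a b},
          Matrix.det (Matrix.of fun i j : Fin n => Φ i (y j)) *
            Matrix.det (Matrix.of fun i j : Fin n => Ψ i (y j)) :=
        setIntegral_indicator hcubeMeas
    _ = _ := setIntegral_congr_set hSae
end
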